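/- arXiv:0803.1387 — 12 statements merged into one kernel-verified Lean document; each statement's English description precedes it below -/
import Mathlib

section
/- Let X be a topological space, T a group acting on X by homeomorphisms, and suppose the system (X,T) is pseudo-minimal, i.e. there is a nonempty open set U such that the orbit of every point of U is dense in X. If x is a point whose orbit is dense and y lies in the omega-limit set of x with the orbit of y also dense, then the omega-limit set of x equals the whole space X (i.e. ω(x) is dense). Equivalently: for x with dense orbit, either ω(x) is dense in X or ω(x) is disjoint from the set of points with dense orbit. -/
open Topology

/-- The full (two-sided) orbit of `x` under the homeomorphism `f`. -/
def Homeomorph.zorbit {X : Type*} [TopologicalSpace X] (f : X ≃ₜ X) (x : X) : Set X :=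
  Set.range fun n : ℤ => (f.toEquiv ^ n) x

/-- The omega-limit set of `x` under the homeomorphism `f`. -/
def Homeomorph.omegaSet {X : Type*} [TopologicalSpace X] (f : X ≃ₜ X) (x : X) : Set X :=
  {y | ∀ V ∈ 𝓝 y, ∀ N : ℕ, ∃ n : ℕ, N ≤ n ∧ (f.toEquiv ^ (n : ℤ)) x ∈ V}

lemma continuous_zpow_toEquiv {X : Type*} [TopologicalSpace X] (f : X ≃ₜ X) (k : ℤ) :
    Continuous (f.toEquiv ^ k : X ≃ X) := by
  induction k using Int.induction_on with
  | zero => simpa using continuous_id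
  | succ n ih =>
    have : (f.toEquiv ^ ((n : ℤ) + 1)) = f.toEquiv ^ (n : ℤ) * f.toEquiv := by
      rw [zpow_add_one]
    rw [this]
    exact ih.comp f.continuous
  | pred n ih =>
    have : (f.toEquiv ^ (-(n : ℤ) - 1)) = f.toEquiv ^ (-(n : ℤ)) * f.toEquiv⁻¹ := by
      rw [zpow_sub_one]
    rw [this]
    exact ih.comp f.symm.continuous
  
lemma zorbit_subset_omegaSet {X : Type*} [TopologicalSpace X] (f : X ≃ₜ X)
    (x y : X) (hy : y ∈ f.omegaSet x) : f.zorbit y ⊆ f.omegaSet x := by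
  rintro _ ⟨k, rfl⟩ V hV N
  have hW : (f.toEquiv ^ k : X ≃ X) ⁻¹' V ∈ 𝓝 y :=
    (continuous_zpow_toEquiv f k).continuousAt.preimage_mem_nhds hV
  obtain ⟨n, hn1, hn2⟩ := hy _ hW (N + k.natAbs)
  refine ⟨(n + k).toNat, by omega, ?_⟩
  have hnk : ((n + k).toNat : ℤ) = k + n := by omega
  rw [hnk, zpow_add, Equiv.Perm.mul_apply]
  exact hn2

/-- If `(X, f)` is pseudo-minimal, `x` has dense orbit, and `y ∈ ω(x)` also has dense
orbit, then `ω(x)` is dense (equals the whole space in the compact case). -/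
theorem stmt0 {X : Type*} [TopologicalSpace X] (f : X ≃ₜ X)
    (hpm : ∃ U : Set X, IsOpen U ∧ U.Nonempty ∧ ∀ x ∈ U, Dense (f.zorbit x))
    (x y : X) (hx : Dense (f.zorbit x)) (hy : y ∈ f.omegaSet x)
    (hyd : Dense (f.zorbit y)) : Dense (f.omegaSet x) :=
  hyd.mono (zorbit_subset_omegaSet f x y hy)
end

section
/- Let f : X → X be a homeomorphism of a locally compact, perfect, separable metric space X. If f is topologically transitive (some two-sided orbit is dense), then there exists a point y whose forward orbit {f^n(y) : n ≥ 0} is dense in X, and there exists a point z whose backward orbit {f^{-n}(z) : n ≥ 0} is dense in X. Moreover, if the full orbit of x is dense, then either the forward orbit of x or the backward orbit of x is dense. -/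
open Topology

private lemma homeo_pow_apply_eq_iterate {X : Type*} [TopologicalSpace X] (g : X ≃ₜ X) :
    ∀ (n : ℕ) (y : X), (g.toEquiv ^ (n : ℤ)) y = (⇑g)^[n] y := by
  intro n
  induction n with
  | zero => intro y; simp
  | succ n ih =>
    intro y
    rw [Function.iterate_succ_apply,
      show ((n + 1 : ℕ) : ℤ) = (n : ℤ) + 1 by push_cast; ring, zpow_add, zpow_one,
      Equiv.Perm.mul_apply]
    exact ih (g y)

private lemma zpow_neg_apply_eq_iterate {X : Type*} [TopologicalSpace X] (f : X ≃ₜ X)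
    (n : ℕ) (y : X) : (f.toEquiv ^ (-(n : ℤ))) y = (⇑f.symm)^[n] y := by
  have h1 : f.toEquiv ^ (-(n : ℤ)) = (f.symm.toEquiv) ^ ((n : ℕ) : ℤ) := by
    rw [zpow_neg, ← inv_zpow]
    rfl
  rw [h1]
  exact homeo_pow_apply_eq_iterate f.symm n y

private lemma continuous_zpow_apply {X : Type*} [TopologicalSpace X] (f : X ≃ₜ X) (n : ℤ) :
    Continuous fun y : X => (f.toEquiv ^ n) y := by
  rcases Int.eq_nat_or_neg n with ⟨m, rfl | rfl⟩
  · have h : (fun y : X => (f.toEquiv ^ (m : ℤ)) y) = (⇑f)^[m] := by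
      funext y; exact homeo_pow_apply_eq_iterate f m y
    rw [h]; exact f.continuous.iterate m
  · have h : (fun y : X => (f.toEquiv ^ (-(m : ℤ))) y) = (⇑f.symm)^[m] := by
      funext y; exact zpow_neg_apply_eq_iterate f m y
    rw [h]; exact f.symm.continuous.iterate m

private lemma exists_disjoint_opens {X : Type*} [MetricSpace X] [PerfectSpace X]
    {W : Set X} (hW : IsOpen W) (hne : W.Nonempty) :
    ∃ W₁ W₂ : Set X, IsOpen W₁ ∧ IsOpen W₂ ∧ W₁.Nonempty ∧ W₂.Nonempty ∧
      W₁ ⊆ W ∧ W₂ ⊆ W ∧ Disjoint W₁ W₂ := by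
  obtain ⟨w, hw⟩ := hne
  have hmem : W ∈ 𝓝[≠] w := mem_nhdsWithin_of_mem_nhds (hW.mem_nhds hw)
  obtain ⟨w', hw'W, hw'ne⟩ :=
    Filter.nonempty_of_mem (Filter.inter_mem hmem self_mem_nhdsWithin)
  have hne' : w ≠ w' := fun h => hw'ne (h ▸ rfl)
  obtain ⟨u, v, hu, hv, hwu, hw'v, huv⟩ := t2_separation hne'
  exact ⟨W ∩ u, W ∩ v, hW.inter hu, hW.inter hv, ⟨w, hw, hwu⟩, ⟨w', hw'W, hw'v⟩,
    Set.inter_subset_left, Set.inter_subset_left,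
    huv.mono Set.inter_subset_right Set.inter_subset_right⟩

private lemma exists_zpow_mem {X : Type*} [MetricSpace X] (f : X ≃ₜ X) {x : X}
    (hx : Dense (Set.range fun n : ℤ => (f.toEquiv ^ n) x))
    {A B : Set X} (hA : IsOpen A) (hAne : A.Nonempty) (hB : IsOpen B) (hBne : B.Nonempty) :
    ∃ (k : ℤ) (a : X), a ∈ A ∧ (f.toEquiv ^ k) a ∈ B := by
  obtain ⟨p, ⟨i, rfl⟩, hpA⟩ := hx.exists_mem_open hA hAne
  obtain ⟨q, ⟨j, rfl⟩, hqB⟩ := hx.exists_mem_open hB hBne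
  refine ⟨j - i, _, hpA, ?_⟩
  rw [← Equiv.Perm.mul_apply, ← zpow_add, sub_add_cancel]
  exact hqB

private lemma exists_forward {X : Type*} [MetricSpace X] [PerfectSpace X] (f : X ≃ₜ X) {x : X}
    (hx : Dense (Set.range fun n : ℤ => (f.toEquiv ^ n) x))
    {A B : Set X} (hA : IsOpen A) (hAne : A.Nonempty) (hB : IsOpen B) (hBne : B.Nonempty) :
    ∃ (n : ℕ) (a : X), a ∈ A ∧ (⇑f)^[n] a ∈ B := by
  have base : ∀ (k : ℤ), 0 ≤ k → ∀ {A B : Set X},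
      (∃ a ∈ A, (f.toEquiv ^ k) a ∈ B) →
      ∃ (n : ℕ) (a : X), a ∈ A ∧ (⇑f)^[n] a ∈ B := by
    rintro k hk A B ⟨a, ha, hab⟩
    refine ⟨k.toNat, a, ha, ?_⟩
    rw [← homeo_pow_apply_eq_iterate f k.toNat a, Int.toNat_of_nonneg hk]
    exact hab
  have key : ∀ (m : ℕ) (k : ℤ), -k ≤ (m : ℤ) → ∀ {A B : Set X}, IsOpen A → IsOpen B →
      (∃ a ∈ A, (f.toEquiv ^ k) a ∈ B) →
      ∃ (n : ℕ) (a : X), a ∈ A ∧ (⇑f)^[n] a ∈ B := by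
    intro m
    induction m with
    | zero =>
      intro k hk A B _ _ h
      exact base k (by omega) h
    | succ m ih =>
      rintro k hk A B hA hB ⟨a, ha, hab⟩
      rcases le_or_gt 0 k with hk0 | hk0
      · exact base k hk0 ⟨a, ha, hab⟩
      · set W := A ∩ (fun y => (f.toEquiv ^ k) y) ⁻¹' B with hWdef
        have hWopen : IsOpen W := hA.inter (hB.preimage (continuous_zpow_apply f k))
        have hWne : W.Nonempty := ⟨a, ha, hab⟩
        obtain ⟨W₁, W₂, h₁, h₂, hne₁, hne₂, hsub₁, hsub₂, hdisj⟩ :=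
          exists_disjoint_opens hWopen hWne
        obtain ⟨l, w, hw₁, hw₂⟩ := exists_zpow_mem f hx h₁ hne₁ h₂ hne₂
        have hlne : l ≠ 0 := by
          rintro rfl
          simp only [zpow_zero, Equiv.Perm.coe_one, id_eq] at hw₂
          exact Set.disjoint_left.1 hdisj hw₁ hw₂
        obtain ⟨p, t, ht, hpW, hptW⟩ :
            ∃ (p : X) (t : ℤ), 1 ≤ t ∧ p ∈ W ∧ (f.toEquiv ^ t) p ∈ W := by
          rcases lt_or_gt_of_ne hlne with hl | hl
          · refine ⟨(f.toEquiv ^ l) w, -l, by omega, hsub₂ hw₂, ?_⟩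
            rw [← Equiv.Perm.mul_apply, ← zpow_add, neg_add_cancel, zpow_zero,
              Equiv.Perm.coe_one, id_eq]
            exact hsub₁ hw₁
          · exact ⟨w, l, hl, hsub₁ hw₁, hsub₂ hw₂⟩
        refine ih (k + t) (by omega) hA hB ⟨p, hpW.1, ?_⟩
        have h2 : (f.toEquiv ^ k) ((f.toEquiv ^ t) p) ∈ B := hptW.2
        rw [zpow_add, Equiv.Perm.mul_apply]
        exact h2
  obtain ⟨k, a, ha, hab⟩ := exists_zpow_mem f hx hA hAne hB hBne
  exact key (-k).toNat k (Int.self_le_toNat _) hA hB ⟨a, ha, hab⟩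

private lemma exists_dense_forward_orbit {X : Type*} [MetricSpace X] [Nonempty X]
    [LocallyCompactSpace X] [SecondCountableTopology X] (g : X ≃ₜ X)
    (H : ∀ {A B : Set X}, IsOpen A → A.Nonempty → IsOpen B → B.Nonempty →
      ∃ (n : ℕ) (a : X), a ∈ A ∧ (⇑g)^[n] a ∈ B) :
    ∃ y : X, Dense (Set.range fun n : ℕ => (⇑g)^[n] y) := by
  set b := TopologicalSpace.countableBasis X with hbdef
  have hb : TopologicalSpace.IsTopologicalBasis b := TopologicalSpace.isBasis_countableBasis X
  let ι := {s : Set X // s ∈ b ∧ s.Nonempty}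
  have hcount : Countable ι := by
    have h : {s : Set X | s ∈ b ∧ s.Nonempty}.Countable :=
      (TopologicalSpace.countable_countableBasis X).mono fun s hs => hs.1
    exact h.to_subtype
  let D : ι → Set X := fun i => ⋃ n : ℕ, (⇑g)^[n] ⁻¹' i.1
  have hDopen : ∀ i, IsOpen (D i) := fun i =>
    isOpen_iUnion fun n => (hb.isOpen i.2.1).preimage (g.continuous.iterate n)
  have hDdense : ∀ i, Dense (D i) := by
    intro i
    rw [dense_iff_inter_open]
    intro V hV hVne
    obtain ⟨n, a, haV, hfa⟩ := H hV hVne (hb.isOpen i.2.1) i.2.2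
    exact ⟨a, haV, Set.mem_iUnion.2 ⟨n, hfa⟩⟩
  obtain ⟨y, hy⟩ := (dense_iInter_of_isOpen hDopen hDdense).nonempty
  refine ⟨y, ?_⟩
  rw [dense_iff_inter_open]
  rintro V hV ⟨v, hv⟩
  obtain ⟨t, htb, hvt, htV⟩ := hb.exists_subset_of_mem_open hv hV
  have hymem : y ∈ D ⟨t, htb, ⟨v, hvt⟩⟩ := Set.mem_iInter.1 hy _
  obtain ⟨n, hn⟩ := Set.mem_iUnion.1 hymem
  exact ⟨(⇑g)^[n] y, htV hn, ⟨n, rfl⟩⟩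

/-- On a locally compact, perfect, separable metric space, a topologically transitive
homeomorphism has a point with dense forward orbit and a point with dense backward
orbit; moreover any point with dense full orbit has dense forward or backward orbit. -/
theorem stmt1 {X : Type*} [MetricSpace X] [LocallyCompactSpace X]
    [SecondCountableTopology X] [PerfectSpace X] (f : X ≃ₜ X)
    (htrans : ∃ x : X, Dense (Set.range fun n : ℤ => (f.toEquiv ^ n) x)) :
    (∃ y : X, Dense (Set.range fun n : ℕ => (⇑f)^[n] y)) ∧
    (∃ z : X, Dense (Set.range fun n : ℕ => (⇑f.symm)^[n] z)) ∧
    ∀ x : X, Dense (Set.range fun n : ℤ => (f.toEquiv ^ n) x) →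
      Dense (Set.range fun n : ℕ => (⇑f)^[n] x) ∨
      Dense (Set.range fun n : ℕ => (⇑f.symm)^[n] x) := by
  obtain ⟨x, hx⟩ := htrans
  haveI : Nonempty X := ⟨x⟩
  have Hf : ∀ {A B : Set X}, IsOpen A → A.Nonempty → IsOpen B → B.Nonempty →
      ∃ (n : ℕ) (a : X), a ∈ A ∧ (⇑f)^[n] a ∈ B :=
    fun hA hAne hB hBne => exists_forward f hx hA hAne hB hBne
  have Hfsymm : ∀ {A B : Set X}, IsOpen A → A.Nonempty → IsOpen B → B.Nonempty →
      ∃ (n : ℕ) (a : X), a ∈ A ∧ (⇑f.symm)^[n] a ∈ B := by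
    intro A B hA hAne hB hBne
    obtain ⟨n, a, haB, hfa⟩ := exists_forward f hx hB hBne hA hAne
    refine ⟨n, (⇑f)^[n] a, hfa, ?_⟩
    have hli : Function.LeftInverse (⇑f.symm) (⇑f) := f.symm_apply_apply
    rw [hli.iterate n a]
    exact haB
  refine ⟨exists_dense_forward_orbit f Hf, exists_dense_forward_orbit f.symm Hfsymm, ?_⟩
  intro x' hx'
  set F := closure (Set.range fun n : ℕ => (⇑f)^[n] x') with hFdef
  set Bk := closure (Set.range fun n : ℕ => (⇑f.symm)^[n] x') with hBkdef
  have hcover : ∀ n : ℤ, (f.toEquiv ^ n) x' ∈ F ∪ Bk := by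
    intro n
    rcases Int.eq_nat_or_neg n with ⟨m, rfl | rfl⟩
    · left
      rw [homeo_pow_apply_eq_iterate f m x']
      exact subset_closure ⟨m, rfl⟩
    · right
      rw [zpow_neg_apply_eq_iterate f m x']
      exact subset_closure ⟨m, rfl⟩
  have huniv : F ∪ Bk = Set.univ := by
    apply Set.eq_univ_of_univ_subset
    calc Set.univ = closure (Set.range fun n : ℤ => (f.toEquiv ^ n) x') :=
          (dense_iff_closure_eq.1 hx').symm
      _ ⊆ closure (F ∪ Bk) := closure_mono (Set.range_subset_iff.2 hcover)
      _ = F ∪ Bk := (isClosed_closure.union isClosed_closure).closure_eq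
  by_cases hBk : Bk = Set.univ
  · right
    rw [dense_iff_closure_eq]
    exact hBk
  · left
    have hU : IsOpen Bkᶜ := isClosed_closure.isOpen_compl
    have hUne : Bkᶜ.Nonempty := by rwa [Set.nonempty_compl]
    have hUF : Bkᶜ ⊆ F := by
      intro y hy
      have hyFU : y ∈ F ∪ Bk := huniv ▸ Set.mem_univ y
      exact hyFU.resolve_right hy
    rw [dense_iff_inter_open]
    intro V hV hVne
    obtain ⟨n, a, haU, hfa⟩ := exists_forward f hx' hU hUne hV hVne
    have hG : IsOpen (Bkᶜ ∩ (⇑f)^[n] ⁻¹' V) := hU.inter (hV.preimage (f.continuous.iterate n))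
    have haF : a ∈ F := hUF haU
    obtain ⟨p, hpG, hpO⟩ := (mem_closure_iff.1 haF) _ hG ⟨haU, hfa⟩
    obtain ⟨j, hj⟩ := hpO
    refine ⟨(⇑f)^[n] p, hpG.2, ⟨n + j, ?_⟩⟩
    show (⇑f)^[n + j] x' = (⇑f)^[n] p
    rw [Function.iterate_add_apply]
    exact congrArg (⇑f)^[n] hj
end

section
/- Let X be a locally compact, perfect, separable metric space and f : X → X a homeomorphism. If there exists a nonempty open set U such that the forward orbit {f^n(x) : n ≥ 0} is dense in X for every x ∈ U (f is positively pseudo-minimal), then X is compact and every orbit of f is dense, i.e. f is minimal. -/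
open Topology

/-- A positively pseudo-minimal homeomorphism of a locally compact, perfect, separable
metric space lives on a compact space and is minimal. -/
theorem stmt3 {X : Type*} [MetricSpace X] [LocallyCompactSpace X]
    [SecondCountableTopology X] [PerfectSpace X] (f : X ≃ₜ X)
    (hppm : ∃ U : Set X, IsOpen U ∧ U.Nonempty ∧
      ∀ x ∈ U, Dense (Set.range fun n : ℕ => (⇑f)^[n] x)) :
    CompactSpace X ∧ ∀ x : X, Dense (Set.range fun n : ℤ => (f.toEquiv ^ n) x) := by
  obtain ⟨U, hUo, ⟨u₀, hu₀⟩, hU⟩ := hppm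
  -- The set of points whose forward orbit meets `U`.
  set A : Set X := ⋃ n : ℕ, (⇑f)^[n] ⁻¹' U with hAdef
  have hAo : IsOpen A := isOpen_iUnion fun n => hUo.preimage (f.continuous.iterate n)
  have hUA : U ⊆ A := fun x hx => Set.mem_iUnion.2 ⟨0, hx⟩
  -- Every point of `A` has dense forward orbit.
  have hAdense : ∀ x ∈ A, Dense (Set.range fun n : ℕ => (⇑f)^[n] x) := by
    intro x hx
    obtain ⟨n, hn⟩ := Set.mem_iUnion.1 hx
    refine (hU _ hn).mono ?_
    rintro y ⟨m, rfl⟩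
    exact ⟨m + n, by simp [Function.iterate_add_apply]⟩
  -- `A` is forward invariant.
  have hstep : ∀ x ∈ A, f x ∈ A := by
    intro x hx
    have hd : Dense ((Set.range fun n : ℕ => (⇑f)^[n] x) \ {x}) :=
      (hAdense x hx).diff_singleton x
    have hsub : ((Set.range fun n : ℕ => (⇑f)^[n] x) \ {x}) ⊆
        Set.range fun n : ℕ => (⇑f)^[n] (f x) := by
      rintro y ⟨⟨m, rfl⟩, hy⟩
      cases m with
      | zero => exact absurd rfl hy
      | succ k => exact ⟨k, (Function.iterate_succ_apply (⇑f) k x).symm⟩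
    obtain ⟨y, ⟨m, rfl⟩, hyU⟩ := (hd.mono hsub).exists_mem_open hUo ⟨u₀, hu₀⟩
    exact Set.mem_iUnion.2 ⟨m, hyU⟩
  have hiter : ∀ (k : ℕ), ∀ x ∈ A, (⇑f)^[k] x ∈ A := by
    intro k
    induction k with
    | zero => exact fun x hx => hx
    | succ k ih =>
      intro x hx
      rw [Function.iterate_succ_apply]
      exact ih _ (hstep x hx)
  -- A compact neighborhood inside `A`.
  obtain ⟨K₀, hK₀nhds, hK₀A, hK₀c⟩ := local_compact_nhds (hAo.mem_nhds (hUA hu₀))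
  set V : Set X := interior K₀ with hVdef
  have hu₀V : u₀ ∈ V := mem_interior_iff_mem_nhds.2 hK₀nhds
  set K : Set X := closure V with hKdef
  have hKK₀ : K ⊆ K₀ := closure_minimal interior_subset hK₀c.isClosed
  have hKc : IsCompact K := hK₀c.of_isClosed_subset isClosed_closure hKK₀
  have hKA : K ⊆ A := hKK₀.trans hK₀A
  have hVK : V ⊆ K := subset_closure
  -- Every point of `K` returns to `V` in positive time.
  have hret : ∀ x ∈ K, ∃ n : ℕ, 1 ≤ n ∧ (⇑f)^[n] x ∈ V := by
    intro x hx
    have hx' : f x ∈ A := hstep x (hKA hx)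
    obtain ⟨y, ⟨m, rfl⟩, hyV⟩ :=
      (hAdense _ hx').exists_mem_open isOpen_interior ⟨u₀, hu₀V⟩
    refine ⟨m + 1, Nat.succ_le_succ (Nat.zero_le m), ?_⟩
    rwa [Function.iterate_succ_apply]
  -- A uniform bound on return times via compactness.
  obtain ⟨t, ht⟩ := hKc.elim_finite_subcover (fun n : ℕ => (⇑f)^[n + 1] ⁻¹' V)
    (fun n => isOpen_interior.preimage (f.continuous.iterate (n + 1)))
    (by
      intro x hx
      obtain ⟨n, hn1, hnV⟩ := hret x hx
      obtain ⟨m, rfl⟩ := Nat.exists_eq_add_of_le hn1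
      exact Set.mem_iUnion.2 ⟨m, by simpa [Nat.add_comm] using hnV⟩)
  set N : ℕ := t.sup id + 1 with hNdef
  have hretN : ∀ x ∈ K, ∃ n : ℕ, 1 ≤ n ∧ n ≤ N ∧ (⇑f)^[n] x ∈ V := by
    intro x hx
    obtain ⟨m, hmt, hmV⟩ := Set.mem_iUnion₂.1 (ht hx)
    exact ⟨m + 1, Nat.succ_le_succ (Nat.zero_le m),
      Nat.succ_le_succ (Finset.le_sup (f := id) hmt), hmV⟩
  -- The compact set trapping all forward orbits from `K`.
  set C : Set X := ⋃ k ∈ Set.Iic N, (⇑f)^[k] '' K with hCdef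
  have hCc : IsCompact C :=
    (Set.finite_Iic N).isCompact_biUnion fun k _ => hKc.image (f.continuous.iterate k)
  have htrap : ∀ m : ℕ, ∀ x ∈ K, (⇑f)^[m] x ∈ C := by
    intro m
    induction m using Nat.strong_induction_on with
    | _ m ih =>
      intro x hx
      by_cases hm : m ≤ N
      · exact Set.mem_biUnion hm ⟨x, hx, rfl⟩
      · push_neg at hm
        obtain ⟨n, hn1, hnN, hnV⟩ := hretN x hx
        have hlt : m - n < m := Nat.sub_lt (by omega) hn1
        have heq : (⇑f)^[m] x = (⇑f)^[m - n] ((⇑f)^[n] x) := by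
          rw [← Function.iterate_add_apply]
          congr 1
          omega
        rw [heq]
        exact ih (m - n) hlt _ (hVK hnV)
  -- The whole space is contained in `C`.
  have hXC : (Set.univ : Set X) ⊆ C := by
    have hd := hU u₀ hu₀
    have hsub : Set.range (fun n : ℕ => (⇑f)^[n] u₀) ⊆ C := by
      rintro y ⟨n, rfl⟩
      exact htrap n u₀ (hVK hu₀V)
    calc (Set.univ : Set X) = closure (Set.range fun n : ℕ => (⇑f)^[n] u₀) :=
          hd.closure_eq.symm
      _ ⊆ C := closure_minimal hsub hCc.isClosed
  have hCuniv : C = Set.univ := Set.univ_subset_iff.1 hXC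
  have hcs : CompactSpace X := ⟨by rw [← hCuniv]; exact hCc⟩
  have hCA : C ⊆ A := by
    intro y hy
    obtain ⟨k, _, x, hx, rfl⟩ := Set.mem_iUnion₂.1 hy
    exact hiter k x (hKA hx)
  have hall : ∀ x : X, Dense (Set.range fun n : ℕ => (⇑f)^[n] x) :=
    fun x => hAdense x (hCA (hXC (Set.mem_univ x)))
  refine ⟨hcs, fun x => (hall x).mono ?_⟩
  rintro y ⟨n, rfl⟩
  refine ⟨(n : ℤ), ?_⟩
  simp only [zpow_natCast]
  rw [← Homeomorph.coe_toEquiv f, ← Equiv.Perm.coe_pow]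
end

section
/- Let X be a smooth manifold of dimension greater than 1 and φ : X × ℝ → X a C¹ flow. If there exists a nonempty open set U such that the forward semi-orbit {φ(x,t) : t ≥ 0} is dense in X for every x ∈ U, then X is compact and the flow is minimal (every orbit is dense). -/
open Topology Manifold Filter Set

/-- A positively pseudo-minimal `C¹` flow on a smooth manifold of dimension `> 1`
lives on a compact manifold and is minimal. -/
theorem stmt4 {n : ℕ} (hn : 1 < n) {X : Type*} [TopologicalSpace X] [T2Space X]
    [ChartedSpace (EuclideanSpace ℝ (Fin n)) X] [IsManifold (𝓡 n) (⊤ : ℕ∞) X]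
    (φ : X → ℝ → X)
    (hC1 : ContMDiff ((𝓡 n).prod 𝓘(ℝ, ℝ)) (𝓡 n) 1 fun p : X × ℝ => φ p.1 p.2)
    (h0 : ∀ x, φ x 0 = x)
    (hadd : ∀ x s t, φ (φ x s) t = φ x (s + t))
    (hppm : ∃ U : Set X, IsOpen U ∧ U.Nonempty ∧
      ∀ x ∈ U, Dense {y : X | ∃ t : ℝ, 0 ≤ t ∧ φ x t = y}) :
    CompactSpace X ∧ ∀ x : X, Dense (Set.range (φ x)) := by
  obtain ⟨U, hUopen, ⟨u, huU⟩, hdense⟩ := hppm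
  have hcont : Continuous fun p : X × ℝ => φ p.1 p.2 := hC1.continuous
  have hcx : ∀ x : X, Continuous (φ x) := fun x =>
    hcont.comp (continuous_const.prodMk continuous_id)
  have hct : ∀ t : ℝ, Continuous (fun x => φ x t) := fun t =>
    hcont.comp (continuous_id.prodMk continuous_const)
  -- X is locally compact
  haveI : LocallyCompactSpace X :=
    ChartedSpace.locallyCompactSpace (EuclideanSpace ℝ (Fin n)) X
  obtain ⟨K, hKnhds, hKU, hKcomp⟩ :=
    local_compact_nhds (show U ∈ 𝓝 u from hUopen.mem_nhds huU)
  set V := interior K with hVdef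
  have huV : u ∈ V := mem_interior_iff_mem_nhds.2 hKnhds
  have hVK : V ⊆ K := interior_subset
  have hVopen : IsOpen V := isOpen_interior
  -- no nonempty open subset of X is a singleton
  have hnontriv : ∀ p : X, ¬ IsOpen ({p} : Set X) := by
    intro p hopen
    haveI : Nontrivial (EuclideanSpace ℝ (Fin n)) := by
      have h1 : (EuclideanSpace.single (⟨0, by omega⟩ : Fin n) (1 : ℝ)) ≠ 0 := by
        intro h
        have := congrArg (fun v => v (⟨0, by omega⟩ : Fin n)) h
        simp [EuclideanSpace.single] at this
      exact ⟨_, 0, h1⟩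
    set e := chartAt (EuclideanSpace ℝ (Fin n)) p
    have hsub : ({p} : Set X) ⊆ e.source :=
      Set.singleton_subset_iff.2 (mem_chart_source (EuclideanSpace ℝ (Fin n)) p)
    have himg : IsOpen (e '' {p}) := e.isOpen_image_of_subset_source hopen hsub
    rw [Set.image_singleton] at himg
    haveI := Module.punctured_nhds_neBot ℝ (EuclideanSpace ℝ (Fin n)) (e p)
    have h1 : ({e p} : Set (EuclideanSpace ℝ (Fin n))) ∈ 𝓝[≠] (e p) :=
      mem_nhdsWithin_of_mem_nhds (himg.mem_nhds rfl)
    have h2 : ({e p}ᶜ : Set (EuclideanSpace ℝ (Fin n))) ∈ 𝓝[≠] (e p) :=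
      self_mem_nhdsWithin
    obtain ⟨z, hz1, hz2⟩ := Filter.nonempty_of_mem (Filter.inter_mem h1 h2)
    exact hz2 hz1
  -- the visits of the forward orbit of u to V are syndetic
  have hsynd : ∃ T : ℝ, 0 < T ∧ ∀ s : ℝ, 0 ≤ s → ∃ r, s ≤ r ∧ r ≤ s + T ∧ φ u r ∈ V := by
    by_contra hc
    push_neg at hc
    choose s hs0 hsgap using fun m : ℕ => hc (m + 1) (by positivity)
    set S : ℕ → Set ℝ := fun m => {r | r ∈ Set.Icc 0 (s m) ∧ φ u r ∈ V} with hSdef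
    have hS0 : ∀ m, (0 : ℝ) ∈ S m := fun m => ⟨⟨le_refl 0, hs0 m⟩, by rw [h0]; exact huV⟩
    have hSbdd : ∀ m, BddAbove (S m) := fun m => ⟨s m, fun r hr => hr.1.2⟩
    set b : ℕ → ℝ := fun m => sSup (S m) with hbdef
    have hb0 : ∀ m, 0 ≤ b m := fun m => le_csSup (hSbdd m) (hS0 m)
    have hbs : ∀ m, b m ≤ s m := fun m => csSup_le ⟨0, hS0 m⟩ fun r hr => hr.1.2
    set q : ℕ → X := fun m => φ u (b m) with hqdef
    have hqK : ∀ m, q m ∈ K := by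
      intro m
      have h1 : b m ∈ closure (S m) := csSup_mem_closure ⟨0, hS0 m⟩ (hSbdd m)
      have h2 : φ u (b m) ∈ closure (φ u '' S m) :=
        (image_closure_subset_closure_image (hcx u)) ⟨b m, h1, rfl⟩
      have h3 : φ u '' S m ⊆ V := by rintro y ⟨r, hr, rfl⟩; exact hr.2
      exact hKcomp.isClosed.closure_subset_iff.2 (h3.trans hVK) h2
    have hnotV : ∀ (m : ℕ), ∀ t : ℝ, 0 < t → t ≤ (m : ℝ) + 1 → φ (q m) t ∉ V := by
      intro m t ht ht1 hmem
      rw [hadd] at hmem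
      rcases le_or_gt (b m + t) (s m) with h | h
      · have hmemS : b m + t ∈ S m := ⟨⟨by linarith [hb0 m], h⟩, hmem⟩
        have := le_csSup (hSbdd m) hmemS
        linarith
      · exact hsgap m (b m + t) (by linarith) (by linarith [hbs m]) hmem
    -- cluster point of the sequence q in K
    have hle : Filter.map q Filter.atTop ≤ 𝓟 K :=
      Filter.le_principal_iff.2 (Filter.mem_map.2 (Filter.univ_mem' hqK))
    obtain ⟨p, hpK, hp⟩ := hKcomp.exists_clusterPt hle
    have hpnotV : ∀ t : ℝ, 0 < t → φ p t ∉ V := by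
      intro t ht htV
      have hP : (fun x => φ x t) ⁻¹' V ∈ 𝓝 p := ((hVopen.preimage (hct t)).mem_nhds htV)
      obtain ⟨m, hm⟩ : ∃ m : ℕ, t ≤ m := exists_nat_ge t
      have hW : q '' Set.Ici m ∈ Filter.map q Filter.atTop :=
        Filter.image_mem_map (Filter.mem_atTop m)
      obtain ⟨z, hz1, hz2⟩ := clusterPt_iff_nonempty.1 hp hP hW
      obtain ⟨k, hk, rfl⟩ := hz2
      exact hnotV k t ht (by linarith [hm, (Nat.cast_le (α := ℝ)).2 hk]) hz1
    -- density contradiction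
    have hsubset : {y : X | ∃ t : ℝ, 0 ≤ t ∧ φ p t = y} ⊆ (Vᶜ ∪ {p} : Set X) := by
      rintro y ⟨t, ht, rfl⟩
      rcases eq_or_lt_of_le ht with h | h
      · right; simp [← h, h0]
      · left; exact hpnotV t h
    have hclosed : IsClosed (Vᶜ ∪ ({p} : Set X)) := hVopen.isClosed_compl.union isClosed_singleton
    have huniv : (Set.univ : Set X) ⊆ (Vᶜ ∪ {p} : Set X) := by
      rw [← (hdense p (hKU hpK)).closure_eq]
      exact hclosed.closure_subset_iff.2 hsubset
    have hVp : V ⊆ {p} := fun v hv => by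
      rcases huniv (Set.mem_univ v) with h | h
      · exact absurd hv h
      · exact h
    have hup : u = p := hVp huV
    have hVeq : V = ({p} : Set X) := hVp.antisymm (by
      rintro y hy
      simp only [Set.mem_singleton_iff] at hy
      rw [hy, ← hup]; exact huV)
    exact hnontriv p (hVeq ▸ hVopen)
  obtain ⟨T, hT, hsyn⟩ := hsynd
  -- X equals the compact set φ(K × [-T, 0])
  set E := (fun pr : X × ℝ => φ pr.1 pr.2) '' (K ×ˢ Set.Icc (-T) 0) with hEdef
  have hEcomp : IsCompact E := (hKcomp.prod isCompact_Icc).image hcont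
  have hOsub : {y : X | ∃ t : ℝ, 0 ≤ t ∧ φ u t = y} ⊆ E := by
    rintro y ⟨t, ht, rfl⟩
    obtain ⟨r, hr1, hr2, hrV⟩ := hsyn t ht
    refine ⟨(φ u r, t - r), Set.mk_mem_prod (hVK hrV)
      (Set.mem_Icc.mpr ⟨by linarith, by linarith⟩), ?_⟩
    show φ (φ u r) (t - r) = φ u t
    rw [hadd]
    congr 1
    ring
  have hEuniv : E = Set.univ := by
    apply Set.eq_univ_of_univ_subset
    rw [← (hdense u huU).closure_eq]
    exact hEcomp.isClosed.closure_subset_iff.2 hOsub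
  refine ⟨⟨hEuniv ▸ hEcomp⟩, ?_⟩
  intro x
  have hxE : x ∈ E := hEuniv ▸ Set.mem_univ x
  obtain ⟨⟨d, c⟩, ⟨hdK, _⟩, hx⟩ := hxE
  have hd : φ x (-c) = d := by
    rw [← hx]; show φ (φ d c) (-c) = d
    rw [hadd]; simp [h0]
  have hsub : {y : X | ∃ t : ℝ, 0 ≤ t ∧ φ d t = y} ⊆ Set.range (φ x) := by
    rintro y ⟨t, ht, rfl⟩
    refine ⟨-c + t, ?_⟩
    rw [← hd, hadd]
  exact (hdense d (hKU hdK)).mono hsub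
end

section
/- Let X and Y be locally compact, perfect, separable metric spaces and f : X → X, g : Y → Y homeomorphisms. If the product map f × g : X × Y → X × Y is pseudo-minimal, then both (X,f) and (Y,g) are pseudo-minimal, and at least one of them is a minimal system on a compact space. -/
open Topology

section PMAux

variable {X Y : Type*} [TopologicalSpace X] [TopologicalSpace Y]

lemma zpow_apply_add' (f : X ≃ₜ X) (m n : ℤ) (x : X) :
    (f.toEquiv ^ m) ((f.toEquiv ^ n) x) = (f.toEquiv ^ (m + n)) x := by
  rw [zpow_add, Equiv.Perm.mul_apply]

lemma cont_zpow' (f : X ≃ₜ X) (n : ℤ) : Continuous ⇑(f.toEquiv ^ n) := by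
  induction n using Int.induction_on with
  | zero => simpa using continuous_id
  | succ k ih =>
    rw [zpow_add_one, Equiv.Perm.coe_mul]
    exact ih.comp f.continuous
  | pred k ih =>
    rw [zpow_sub_one, Equiv.Perm.coe_mul]
    exact ih.comp f.symm.continuous

lemma orb_shift' (f : X ≃ₜ X) (m : ℤ) (x : X) :
    (Set.range fun n : ℤ => (f.toEquiv ^ n) ((f.toEquiv ^ m) x))
      = Set.range fun n : ℤ => (f.toEquiv ^ n) x := by
  ext y
  constructor
  · rintro ⟨n, rfl⟩
    exact ⟨n + m, (zpow_apply_add' f n m x).symm⟩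
  · rintro ⟨n, rfl⟩
    exact ⟨n - m, by simp only []; rw [zpow_apply_add', sub_add_cancel]⟩

lemma prod_zpow' (f : X ≃ₜ X) (g : Y ≃ₜ Y) (n : ℤ) (z : X × Y) :
    ((f.prodCongr g).toEquiv ^ n) z = ((f.toEquiv ^ n) z.1, (g.toEquiv ^ n) z.2) := by
  induction n using Int.induction_on generalizing z with
  | zero => simp
  | succ k ih =>
    simp only [zpow_add_one, Equiv.Perm.mul_apply]
    rw [ih]
    rfl
  | pred k ih =>
    simp only [zpow_sub_one, Equiv.Perm.mul_apply]
    rw [ih]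
    rfl

lemma dense_proj (f : X ≃ₜ X) (g : Y ≃ₜ Y) {x : X} {y : Y}
    (h : Dense (Set.range fun n : ℤ => ((f.prodCongr g).toEquiv ^ n) (x, y))) :
    Dense (Set.range fun n : ℤ => (f.toEquiv ^ n) x) ∧
      Dense (Set.range fun n : ℤ => (g.toEquiv ^ n) y) := by
  constructor
  · have h1 : (Set.range fun n : ℤ => (f.toEquiv ^ n) x)
        = Prod.fst '' (Set.range fun n : ℤ => ((f.prodCongr g).toEquiv ^ n) (x, y)) := by
      rw [← Set.range_comp]
      refine congrArg _ (funext fun n => ?_)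
      simp [Function.comp, prod_zpow']
    rw [h1, dense_iff_closure_eq]
    apply Set.eq_univ_of_univ_subset
    have hs : Prod.fst '' (closure (Set.range fun n : ℤ => ((f.prodCongr g).toEquiv ^ n) (x, y)))
        ⊆ closure (Prod.fst '' (Set.range fun n : ℤ => ((f.prodCongr g).toEquiv ^ n) (x, y))) :=
      image_closure_subset_closure_image continuous_fst
    rw [h.closure_eq] at hs
    intro p _
    exact hs ⟨(p, y), trivial, rfl⟩
  · have h1 : (Set.range fun n : ℤ => (g.toEquiv ^ n) y)
        = Prod.snd '' (Set.range fun n : ℤ => ((f.prodCongr g).toEquiv ^ n) (x, y)) := by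
      rw [← Set.range_comp]
      refine congrArg _ (funext fun n => ?_)
      simp [Function.comp, prod_zpow']
    rw [h1, dense_iff_closure_eq]
    apply Set.eq_univ_of_univ_subset
    have hs : Prod.snd '' (closure (Set.range fun n : ℤ => ((f.prodCongr g).toEquiv ^ n) (x, y)))
        ⊆ closure (Prod.snd '' (Set.range fun n : ℤ => ((f.prodCongr g).toEquiv ^ n) (x, y))) :=
      image_closure_subset_closure_image continuous_snd
    rw [h.closure_eq] at hs
    intro p _
    exact hs ⟨(x, p), trivial, rfl⟩

end PMAux

/-- limit of one-sided avoiders with growing windows -/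
lemma limit_avoid' {Y : Type*} [MetricSpace Y] (g : Y ≃ₜ Y) {B : Set Y} (hBo : IsOpen B)
    (hc : IsCompact (closure B)) (d : ℤ)
    (h : ∀ k : ℕ, ∃ u ∈ closure B, ∀ n : ℤ, 1 ≤ n → n ≤ k → (g.toEquiv ^ (d * n)) u ∉ B) :
    ∃ u ∈ closure B, ∀ n : ℤ, 1 ≤ n → (g.toEquiv ^ (d * n)) u ∉ B := by
  choose u hu hav using h
  obtain ⟨z, hz, φ, hφ, htend⟩ := hc.tendsto_subseq hu
  refine ⟨z, hz, fun n hn => ?_⟩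
  have hev : ∀ᶠ j in Filter.atTop, (g.toEquiv ^ (d * n)) (u (φ j)) ∈ Bᶜ := by
    filter_upwards [Filter.eventually_ge_atTop n.toNat] with j hj
    apply hav (φ j) n hn
    have h1 : (n.toNat : ℤ) = n := Int.toNat_of_nonneg (by omega)
    calc n = (n.toNat : ℤ) := h1.symm
    _ ≤ (j : ℤ) := by exact_mod_cast hj
    _ ≤ (φ j : ℤ) := by exact_mod_cast hφ.le_apply
  have htend2 : Filter.Tendsto (fun j => (g.toEquiv ^ (d * n)) (u (φ j))) Filter.atTop
      (𝓝 ((g.toEquiv ^ (d * n)) z)) :=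
    ((cont_zpow' g (d * n)).continuousAt.tendsto).comp htend
  exact (isClosed_compl_iff.mpr hBo).mem_of_tendsto htend2 hev

lemma cm_of_cover {X : Type*} [TopologicalSpace X] [T2Space X] [LocallyCompactSpace X] [Nonempty X]
    (f : X ≃ₜ X)
    (h : ∀ A : Set X, IsOpen A → A.Nonempty → ∃ F : Finset ℤ, ∀ x, ∃ n ∈ F, (f.toEquiv ^ n) x ∈ A) :
    CompactSpace X ∧ ∀ x, Dense (Set.range fun n : ℤ => (f.toEquiv ^ n) x) := by
  constructor
  · obtain ⟨K, hKc, hKn⟩ := exists_compact_mem_nhds (Classical.arbitrary X)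
    obtain ⟨F, hF⟩ := h (interior K) isOpen_interior ⟨_, mem_interior_iff_mem_nhds.mpr hKn⟩
    have hsub : Set.univ ⊆ ⋃ n ∈ F, (fun x => (f.toEquiv ^ n) x) ⁻¹' K := by
      intro x _
      obtain ⟨n, hnF, hnK⟩ := hF x
      exact Set.mem_biUnion hnF (Set.mem_preimage.mpr (interior_subset hnK))
    have hcpt : IsCompact (⋃ n ∈ F, (fun x => (f.toEquiv ^ n) x) ⁻¹' K) := by
      refine F.isCompact_biUnion fun n _ => ?_
      have : (fun x => (f.toEquiv ^ n) x) ⁻¹' K = (fun x => (f.toEquiv ^ (-n)) x) '' K := by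
        ext w
        constructor
        · intro hw
          refine ⟨(f.toEquiv ^ n) w, hw, ?_⟩
          simp only []
          rw [zpow_apply_add', neg_add_cancel, zpow_zero, Equiv.Perm.one_apply]
        · rintro ⟨v, hv, rfl⟩
          simp only [Set.mem_preimage]
          rw [zpow_apply_add', add_neg_cancel, zpow_zero, Equiv.Perm.one_apply]
          exact hv
      rw [this]
      exact hKc.image (cont_zpow' f (-n))
    exact ⟨hcpt.of_isClosed_subset isClosed_univ hsub⟩
  · intro x
    rw [dense_iff_inter_open]
    intro B hBo hBne
    obtain ⟨F, hF⟩ := h B hBo hBne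
    obtain ⟨n, _, hnB⟩ := hF x
    exact ⟨(f.toEquiv ^ n) x, hnB, ⟨n, rfl⟩⟩

/-- From failure of compact-minimality (no finite cover witness) plus a compact-closure open set of
transitive points, produce a one-sided total avoider. -/
lemma total_avoider {X : Type*} [MetricSpace X] [LocallyCompactSpace X] (f : X ≃ₜ X) {V : Set X}
    (hVo : IsOpen V) (hVne : V.Nonempty) (hVc : IsCompact (closure V))
    (htr : ∀ x ∈ closure V, Dense (Set.range fun n : ℤ => (f.toEquiv ^ n) x))
    (hwit : ∃ A₀ : Set X, IsOpen A₀ ∧ A₀.Nonempty ∧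
      ∀ F : Finset ℤ, ∃ x, ∀ n ∈ F, (f.toEquiv ^ n) x ∉ A₀) :
    ∃ A : Set X, IsOpen A ∧ A.Nonempty ∧ closure A ⊆ V ∧
      ∃ ε : ℤ, (ε = 1 ∨ ε = -1) ∧ ∃ η ∈ closure A,
        ∀ n : ℤ, 1 ≤ n → (f.toEquiv ^ (ε * n)) η ∉ A := by
  classical
  obtain ⟨x₀, hx₀⟩ := hVne
  have htr₀ : Dense (Set.range fun n : ℤ => (f.toEquiv ^ n) x₀) := htr x₀ (subset_closure hx₀)
  -- dense set of transitive points
  have hTd : Dense {x : X | Dense (Set.range fun n : ℤ => (f.toEquiv ^ n) x)} := by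
    refine htr₀.mono ?_
    rintro - ⟨n, rfl⟩
    simp only [Set.mem_setOf_eq]
    rw [orb_shift']
    exact htr₀
  obtain ⟨A₀, hA₀o, hA₀ne, hA₀⟩ := hwit
  obtain ⟨-, ⟨m, rfl⟩, hmem⟩ := htr₀.exists_mem_open hA₀o hA₀ne
  set A₁ : Set X := V ∩ (fun x => (f.toEquiv ^ m) x) ⁻¹' A₀ with hA₁def
  have hA₁o : IsOpen A₁ := hVo.inter (hA₀o.preimage (cont_zpow' f m))
  have hx₀A₁ : x₀ ∈ A₁ := ⟨hx₀, hmem⟩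
  have fail₁ : ∀ k : ℕ, ∃ x : X, ∀ n : ℤ, |n| ≤ (k : ℤ) → (f.toEquiv ^ n) x ∉ A₁ := by
    intro k
    obtain ⟨x, hx⟩ := hA₀ ((Finset.Icc (-(k : ℤ)) k).image (fun n => m + n))
    refine ⟨x, fun n hn hmemA₁ => ?_⟩
    have : (f.toEquiv ^ (m + n)) x ∈ A₀ := by
      have h2 := hmemA₁.2
      simp only [Set.mem_preimage] at h2
      rwa [zpow_apply_add'] at h2
    exact hx (m + n) (Finset.mem_image_of_mem _ (Finset.mem_Icc.mpr (abs_le.mp hn))) this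
  obtain ⟨K, hKc, haK, hKA₁⟩ := exists_compact_subset hA₁o hx₀A₁
  set A : Set X := interior K with hAdef
  have hAo : IsOpen A := isOpen_interior
  have hAne : A.Nonempty := ⟨x₀, haK⟩
  have hclA : closure A ⊆ A₁ := (closure_minimal interior_subset hKc.isClosed).trans hKA₁
  have hclAV : closure A ⊆ V := hclA.trans Set.inter_subset_left
  have hclAc : IsCompact (closure A) :=
    hVc.of_isClosed_subset isClosed_closure
      ((closure_mono (hclAV.trans subset_closure |> fun h => subset_closure.trans h)).trans
        (by rw [closure_closure]))
  -- k-avoiders with some side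
  have avoiderK : ∀ k : ℕ, ∃ η ∈ A, ∃ ε : ℤ, (ε = 1 ∨ ε = -1) ∧
      ∀ n : ℤ, 1 ≤ n → n ≤ (k : ℤ) → (f.toEquiv ^ (ε * n)) η ∉ A := by
    intro k
    obtain ⟨xk, hxk⟩ := fail₁ k
    set O : Set X := ⋂ n ∈ Finset.Icc (-(k : ℤ)) (k : ℤ), (fun x => (f.toEquiv ^ n) x) ⁻¹' (closure A)ᶜ with hOdef
    have hOo : IsOpen O := isOpen_biInter_finset fun n _ =>
      (isClosed_closure.isOpen_compl).preimage (cont_zpow' f n)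
    have hxkO : xk ∈ O := by
      refine Set.mem_biInter fun n hn => ?_
      simp only [Set.mem_preimage, Set.mem_compl_iff]
      intro hcl
      exact hxk n (abs_le.mpr (Finset.mem_Icc.mp hn)) (hclA hcl)
    obtain ⟨ξ, hξtr, hξO⟩ := hTd.exists_mem_open hOo ⟨xk, hxkO⟩
    obtain ⟨-, ⟨t₁, rfl⟩, ht₁A⟩ := hξtr.exists_mem_open hAo hAne
    -- minimal |t| visit
    have hP : ∃ s : ℕ, ∃ t : ℤ, t.natAbs = s ∧ (f.toEquiv ^ t) ξ ∈ A := ⟨t₁.natAbs, t₁, rfl, ht₁A⟩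
    set m₀ := Nat.find hP with hm₀def
    obtain ⟨t₀, ht₀abs, ht₀A⟩ := Nat.find_spec hP
    have hmin : ∀ t : ℤ, (f.toEquiv ^ t) ξ ∈ A → m₀ ≤ t.natAbs := by
      intro t ht
      by_contra hlt
      exact Nat.find_min hP (lt_of_not_ge hlt) ⟨t, rfl, ht⟩
    have hbig : (k : ℤ) < |t₀| := by
      by_contra hle
      push_neg at hle
      have hmemI : t₀ ∈ Finset.Icc (-(k:ℤ)) (k:ℤ) := Finset.mem_Icc.mpr (abs_le.mp hle)
      have h3 : (f.toEquiv ^ t₀) ξ ∈ (closure A)ᶜ := Set.mem_iInter₂.mp hξO t₀ hmemI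
      exact h3 (subset_closure ht₀A)
    have hkabs : k < t₀.natAbs := by
      rw [Int.abs_eq_natAbs] at hbig
      exact_mod_cast hbig
    rcases lt_or_gt_of_ne (show t₀ ≠ 0 by intro h; rw [h] at hkabs; simp at hkabs) with hneg | hpos
    · -- t₀ < 0 : forward avoider
      refine ⟨(f.toEquiv ^ t₀) ξ, ht₀A, 1, Or.inl rfl, fun n hn hnk hmem => ?_⟩
      rw [zpow_apply_add'] at hmem
      have h1 := hmin _ hmem
      have h2 : t₀.natAbs ≤ (1 * n + t₀).natAbs := by rw [ht₀abs]; exact h1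
      omega
    · -- t₀ > 0 : backward avoider
      refine ⟨(f.toEquiv ^ t₀) ξ, ht₀A, -1, Or.inr rfl, fun n hn hnk hmem => ?_⟩
      rw [zpow_apply_add'] at hmem
      have h1 := hmin _ hmem
      have h2 : t₀.natAbs ≤ (-1 * n + t₀).natAbs := by rw [ht₀abs]; exact h1
      omega
  -- uniform side
  have hside : ∃ ε : ℤ, (ε = 1 ∨ ε = -1) ∧ ∀ k : ℕ, ∃ η ∈ A,
      ∀ n : ℤ, 1 ≤ n → n ≤ (k : ℤ) → (f.toEquiv ^ (ε * n)) η ∉ A := by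
    by_cases hfwd : ∀ k : ℕ, ∃ η ∈ A, ∀ n : ℤ, 1 ≤ n → n ≤ (k : ℤ) → (f.toEquiv ^ (1 * n)) η ∉ A
    · exact ⟨1, Or.inl rfl, hfwd⟩
    · push_neg at hfwd
      obtain ⟨k₀, hk₀⟩ := hfwd
      refine ⟨-1, Or.inr rfl, fun k => ?_⟩
      obtain ⟨η, hηA, ε, hε, hav⟩ := avoiderK (max k k₀)
      rcases hε with rfl | rfl
      · exfalso
        obtain ⟨n, hn1, hnk₀, hmem⟩ := hk₀ η hηA
        exact (hav n hn1 (hnk₀.trans (by exact_mod_cast le_max_right k k₀))) hmem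
      · exact ⟨η, hηA, fun n hn1 hnk => hav n hn1 (hnk.trans (by exact_mod_cast le_max_left k k₀))⟩
  obtain ⟨ε, hε, havk⟩ := hside
  have hlim := limit_avoid' f hAo hclAc ε (fun k => by
    obtain ⟨η, hηA, hav⟩ := havk k
    exact ⟨η, subset_closure hηA, hav⟩)
  obtain ⟨η, hηcl, hav⟩ := hlim
  exact ⟨A, hAo, hAne, hclAV, ε, hε, η, hηcl, hav⟩

lemma opposite_contra {X Y : Type*} [TopologicalSpace X] [TopologicalSpace Y] [T1Space Y]
    [PerfectSpace Y]
    (f : X ≃ₜ X) (g : Y ≃ₜ Y) {V : Set X} {W : Set Y} {A : Set X} {B : Set Y}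
    (hAo : IsOpen A) (hAne : A.Nonempty) (hBo : IsOpen B) (hBne : B.Nonempty)
    (hT : ∀ x ∈ closure V, ∀ y ∈ closure W,
      Dense (Set.range fun n : ℤ => ((f.prodCongr g).toEquiv ^ n) (x, y)))
    (hAV : closure A ⊆ V) (hBW : closure B ⊆ W)
    {ε : ℤ} (hε : ε = 1 ∨ ε = -1)
    {η : X} {θ : Y} (hη : η ∈ closure A) (hθ : θ ∈ closure B)
    (havX : ∀ n : ℤ, 1 ≤ n → (f.toEquiv ^ (ε * n)) η ∉ A)
    (havY : ∀ n : ℤ, 1 ≤ n → (g.toEquiv ^ (-ε * n)) θ ∉ B) : False := by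
  classical
  have hεε : ε * ε = 1 := by rcases hε with rfl | rfl <;> norm_num
  -- a nonempty open subset of B missing θ
  have hB'ne : (B \ {θ}).Nonempty := by
    by_cases hθB : θ ∈ B
    · have h1 : B \ {θ} ∈ 𝓝[≠] θ :=
        Filter.inter_mem (mem_nhdsWithin_of_mem_nhds (hBo.mem_nhds hθB)) self_mem_nhdsWithin
      exact Filter.nonempty_of_mem h1
    · rw [Set.diff_singleton_eq_self (by simpa using hθB)]
      exact hBne
  have hB'o : IsOpen (B \ {θ}) := hBo.sdiff isClosed_singleton
  have hD := hT η (subset_closure (hAV hη)) θ (subset_closure (hBW hθ))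
  obtain ⟨-, ⟨n, rfl⟩, hmem⟩ := hD.exists_mem_open (hAo.prod hB'o)
    (hAne.prod hB'ne)
  simp only [] at hmem
  rw [prod_zpow'] at hmem
  obtain ⟨hm1, hm2⟩ := hmem
  rcases lt_trichotomy (ε * n) 0 with hlt | heq | hgt
  · -- n on the -ε side : Y avoidance
    have h1 : 1 ≤ -ε * n := by have : -ε * n = -(ε * n) := by ring
                               omega
    have h2 : -ε * (-ε * n) = n := by
      have : -ε * (-ε * n) = (ε * ε) * n := by ring
      rw [this, hεε, one_mul]
    have h3 := havY (-ε * n) h1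
    rw [h2] at h3
    exact h3 hm2.1
  · have hn0 : n = 0 := by rcases hε with rfl | rfl <;> omega
    rw [hn0] at hm2
    simp at hm2
  · have h1 : 1 ≤ ε * n := hgt
    have h2 : ε * (ε * n) = n := by rw [← mul_assoc, hεε, one_mul]
    have := havX (ε * n) h1
    rw [h2] at this
    exact this hm1

/-- Either we can flip the side of the avoider, or the system is compact minimal. -/
lemma flip_or_cm {Y : Type*} [MetricSpace Y] (g : Y ≃ₜ Y) {W B : Set Y}
    (hWc : IsCompact (closure W))
    (hBo : IsOpen B) (hBne : B.Nonempty) (hBW : closure B ⊆ W)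
    (htr : ∀ y ∈ closure W, Dense (Set.range fun n : ℤ => (g.toEquiv ^ n) y))
    {ε : ℤ} (hε : ε = 1 ∨ ε = -1) {θ : Y} (hθ : θ ∈ closure B)
    (hav : ∀ n : ℤ, 1 ≤ n → (g.toEquiv ^ (ε * n)) θ ∉ B) :
    (∃ u ∈ closure B, ∀ n : ℤ, 1 ≤ n → (g.toEquiv ^ (-ε * n)) u ∉ B) ∨
    (CompactSpace Y ∧ ∀ y, Dense (Set.range fun n : ℤ => (g.toEquiv ^ n) y)) := by
  classical
  have hεε : ε * ε = 1 := by rcases hε with rfl | rfl <;> norm_num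
  have hclBc : IsCompact (closure B) :=
    hWc.of_isClosed_subset isClosed_closure
      (by calc closure B ⊆ W := hBW
          _ ⊆ closure W := subset_closure)
  set Mp : ℕ → Prop := fun m => (g.toEquiv ^ (-ε * (m : ℤ))) θ ∈ B with hMpdef
  have hθW : θ ∈ closure W := subset_closure (hBW hθ)
  have hθtr := htr θ hθW
  obtain ⟨-, ⟨t, rfl⟩, htB⟩ := hθtr.exists_mem_open hBo hBne
  simp only [] at htB
  have hεt : ε * t ≤ 0 := by
    by_contra hpos
    push_neg at hpos
    have h2 : ε * (ε * t) = t := by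
      have : ε * (ε * t) = (ε * ε) * t := by ring
      rw [this, hεε, one_mul]
    have := hav (ε * t) hpos
    rw [h2] at this
    exact this htB
  have hM0 : Mp (-(ε * t)).toNat := by
    show (g.toEquiv ^ (-ε * ((-(ε * t)).toNat : ℤ))) θ ∈ B
    have h1 : ((-(ε * t)).toNat : ℤ) = -(ε * t) := Int.toNat_of_nonneg (by omega)
    have h2 : -ε * ((-(ε * t)).toNat : ℤ) = t := by
      rw [h1]
      have : -ε * -(ε * t) = (ε * ε) * t := by ring
      rw [this, hεε, one_mul]
    rw [h2]
    exact htB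
  by_cases hQ : ∀ k : ℕ, ∃ b : ℕ, Mp b ∧ ∀ i : ℕ, 1 ≤ i → i ≤ k → ¬ Mp (b + i)
  · -- flip side
    left
    refine limit_avoid' g hBo hclBc (-ε) (fun k => ?_)
    obtain ⟨b, hb, hbav⟩ := hQ k
    refine ⟨(g.toEquiv ^ (-ε * (b : ℤ))) θ, subset_closure hb, fun n hn hnk hmem => ?_⟩
    rw [zpow_apply_add'] at hmem
    have h1 : -ε * n + -ε * (b : ℤ) = -ε * ((b : ℤ) + n) := by ring
    rw [h1] at hmem
    have h2 : ((b + n.toNat : ℕ) : ℤ) = (b : ℤ) + n := by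
      push_cast
      omega
    have : Mp (b + n.toNat) := by
      show (g.toEquiv ^ (-ε * ((b + n.toNat : ℕ) : ℤ))) θ ∈ B
      rw [h2]
      exact hmem
    exact hbav n.toNat (by omega) (by omega) this
  · -- compact minimal
    right
    push_neg at hQ
    obtain ⟨k₀, hk₀⟩ := hQ
    -- hk₀ : ∀ b, Mp b → ∃ i, 1 ≤ i ∧ i ≤ k₀ ∧ Mp (b + i)
    choose nxt h1 h2 h3 using hk₀
    set s : ℕ → {m : ℕ // Mp m} :=
      fun j => Nat.rec ⟨_, hM0⟩ (fun _ p => ⟨p.1 + nxt p.1 p.2, h3 p.1 p.2⟩) j with hsdef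
    have hs_succ : ∀ j, (s (j + 1)).1 = (s j).1 + nxt (s j).1 (s j).2 := fun j => rfl
    have hmono : ∀ j, (s j).1 < (s (j + 1)).1 := fun j => by
      have := h1 (s j).1 (s j).2
      rw [hs_succ]
      omega
    have hgap : ∀ j, (s (j + 1)).1 ≤ (s j).1 + k₀ := fun j => by
      have := h2 (s j).1 (s j).2
      rw [hs_succ]
      omega
    have hge : ∀ j, (s 0).1 + j ≤ (s j).1 := by
      intro j
      induction j with
      | zero => omega
      | succ i ih => have := hmono i; omega
    -- covering: every m ≥ s 0 is within k₀ below a visit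
    have cover : ∀ m : ℕ, (s 0).1 ≤ m → ∃ i : ℕ, i ≤ k₀ ∧ Mp (m + i) := by
      intro m hm
      have hPex : ∃ j, m < (s j).1 := ⟨m + 1, by have := hge (m + 1); omega⟩
      set j₁ := Nat.find hPex with hj₁def
      have hj₁ : m < (s j₁).1 := Nat.find_spec hPex
      have hj₁ne : j₁ ≠ 0 := by
        intro h0
        rw [h0] at hj₁
        omega
      obtain ⟨jp, hjp⟩ : ∃ jp, j₁ = jp + 1 := ⟨j₁ - 1, by omega⟩
      have hjple : (s jp).1 ≤ m := by
        by_contra hlt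
        push_neg at hlt
        exact Nat.find_min hPex (by omega) hlt
      refine ⟨(s j₁).1 - m, ?_, ?_⟩
      · have := hgap jp
        rw [← hjp] at this
        omega
      · have : m + ((s j₁).1 - m) = (s j₁).1 := by omega
        rw [this]
        exact (s j₁).2
    have coverZ : ∀ m : ℤ, ((s 0).1 : ℤ) ≤ m → ∃ i : ℕ, i ≤ k₀ ∧
        (g.toEquiv ^ (-ε * (m + i))) θ ∈ B := by
      intro m hm
      obtain ⟨i, hik, hMp⟩ := cover m.toNat (by omega)
      refine ⟨i, hik, ?_⟩
      have h4 : ((m.toNat + i : ℕ) : ℤ) = m + i := by push_cast; omega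
      have h5 := hMp
      show (g.toEquiv ^ (-ε * (m + (i : ℤ)))) θ ∈ B
      rw [← h4]
      exact h5
    -- limit point
    have hw : ∀ j : ℕ, (g.toEquiv ^ (-ε * ((s j).1 : ℤ))) θ ∈ closure B :=
      fun j => subset_closure (s j).2
    obtain ⟨z, hz, φ, hφ, htend⟩ := hclBc.tendsto_subseq hw
    set C : Set Y := ⋃ i ∈ Finset.range (k₀ + 1), (fun y => (g.toEquiv ^ (ε * (i : ℤ))) y) '' closure B
      with hCdef
    have hCc : IsCompact C :=
      (Finset.range (k₀ + 1)).isCompact_biUnion fun i _ => hclBc.image (cont_zpow' g (ε * i))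
    have hCcl : IsClosed C := hCc.isClosed
    have horb : ∀ n : ℤ, (g.toEquiv ^ n) z ∈ C := by
      intro n
      have hev : ∀ᶠ j in Filter.atTop,
          (g.toEquiv ^ n) ((g.toEquiv ^ (-ε * ((s (φ j)).1 : ℤ))) θ) ∈ C := by
        filter_upwards [Filter.eventually_ge_atTop (n.natAbs)] with j hj
        have hsub : ((s 0).1 : ℤ) ≤ ((s (φ j)).1 : ℤ) - ε * n := by
          have hg1 := hge (φ j)
          have hg2 : j ≤ φ j := hφ.le_apply
          have : ε * n ≤ n.natAbs := by rcases hε with rfl | rfl <;> omega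
          omega
        obtain ⟨i, hik, hmem⟩ := coverZ (((s (φ j)).1 : ℤ) - ε * n) hsub
        have heq : (g.toEquiv ^ n) ((g.toEquiv ^ (-ε * ((s (φ j)).1 : ℤ))) θ)
            = (g.toEquiv ^ (ε * (i : ℤ))) ((g.toEquiv ^ (-ε * ((((s (φ j)).1 : ℤ) - ε * n) + i))) θ) := by
          have hexp : n + -ε * ((s (φ j)).1 : ℤ)
              = ε * (i : ℤ) + -ε * ((((s (φ j)).1 : ℤ) - ε * n) + (i : ℤ)) := by
            linear_combination (-n : ℤ) * hεε
          rw [zpow_apply_add', zpow_apply_add', hexp]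
        rw [heq]
        exact Set.mem_biUnion (Finset.mem_range.mpr (by omega)) ⟨_, subset_closure hmem, rfl⟩
      have htend2 : Filter.Tendsto
          (fun j => (g.toEquiv ^ n) ((g.toEquiv ^ (-ε * ((s (φ j)).1 : ℤ))) θ)) Filter.atTop
          (𝓝 ((g.toEquiv ^ n) z)) :=
        ((cont_zpow' g n).continuousAt.tendsto).comp htend
      exact hCcl.mem_of_tendsto htend2 hev
    have hztr : Dense (Set.range fun n : ℤ => (g.toEquiv ^ n) z) :=
      htr z (subset_closure (hBW hz))
    have huniv : (Set.univ : Set Y) ⊆ C := by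
      have hsub : (Set.range fun n : ℤ => (g.toEquiv ^ n) z) ⊆ C := by
        rintro - ⟨n, rfl⟩
        exact horb n
      have := closure_mono hsub
      rw [hztr.closure_eq, hCcl.closure_eq] at this
      exact this
    constructor
    · exact ⟨hCc.of_isClosed_subset isClosed_univ huniv⟩
    · intro y
      have hyC := huniv (Set.mem_univ y)
      simp only [hCdef, Set.mem_iUnion, Set.mem_image, Finset.mem_range, exists_prop] at hyC
      obtain ⟨i, hi, w', hw', hwy⟩ := hyC
      have htw' := htr w' (subset_closure (hBW hw'))
      rw [← hwy]
      show Dense (Set.range fun n : ℤ => (g.toEquiv ^ n) ((g.toEquiv ^ (ε * (i:ℤ))) w'))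
      rw [orb_shift']
      exact htw'

/-- A homeomorphism is pseudo-minimal if some nonempty open set consists of points
with dense (two-sided) orbit. -/
def IsPseudoMinimal {Z : Type*} [TopologicalSpace Z] (h : Z ≃ₜ Z) : Prop :=
  ∃ U : Set Z, IsOpen U ∧ U.Nonempty ∧
    ∀ z ∈ U, Dense (Set.range fun n : ℤ => (h.toEquiv ^ n) z)

/-- If the product of two homeomorphisms is pseudo-minimal then both factors are
pseudo-minimal, and at least one factor is a minimal system on a compact space. -/
theorem stmt5 {X Y : Type*} [MetricSpace X] [LocallyCompactSpace X]
    [SecondCountableTopology X] [PerfectSpace X] [MetricSpace Y]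
    [LocallyCompactSpace Y] [SecondCountableTopology Y] [PerfectSpace Y]
    (f : X ≃ₜ X) (g : Y ≃ₜ Y) (hpm : IsPseudoMinimal (f.prodCongr g)) :
    IsPseudoMinimal f ∧ IsPseudoMinimal g ∧
    ((CompactSpace X ∧ ∀ x : X, Dense (Set.range fun n : ℤ => (f.toEquiv ^ n) x)) ∨
     (CompactSpace Y ∧ ∀ y : Y, Dense (Set.range fun n : ℤ => (g.toEquiv ^ n) y))) := by
  classical
  obtain ⟨U, hUo, ⟨z₀, hz₀⟩, hU⟩ := hpm
  obtain ⟨V, W, hVo, hWo, hxV, hyW, hVWU⟩ := isOpen_prod_iff.mp hUo z₀.1 z₀.2 (by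
    rwa [Prod.mk.eta])
  haveI : Nonempty X := ⟨z₀.1⟩
  haveI : Nonempty Y := ⟨z₀.2⟩
  -- joint transitivity on V × W
  have hVW : ∀ x ∈ V, ∀ y ∈ W,
      Dense (Set.range fun n : ℤ => ((f.prodCongr g).toEquiv ^ n) (x, y)) :=
    fun x hx y hy => hU (x, y) (hVWU (Set.mk_mem_prod hx hy))
  refine ⟨⟨V, hVo, ⟨z₀.1, hxV⟩, fun x hx => (dense_proj f g (hVW x hx z₀.2 hyW)).1⟩,
    ⟨W, hWo, ⟨z₀.2, hyW⟩, fun y hy => (dense_proj f g (hVW z₀.1 hxV y hy)).2⟩, ?_⟩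
  by_contra hD
  have hcX : ¬(CompactSpace X ∧ ∀ x : X, Dense (Set.range fun n : ℤ => (f.toEquiv ^ n) x)) :=
    fun h => hD (Or.inl h)
  have hcY : ¬(CompactSpace Y ∧ ∀ y : Y, Dense (Set.range fun n : ℤ => (g.toEquiv ^ n) y)) :=
    fun h => hD (Or.inr h)
  -- witnesses for failure of compact minimality
  have hwitX : ∃ A₀ : Set X, IsOpen A₀ ∧ A₀.Nonempty ∧
      ∀ F : Finset ℤ, ∃ x, ∀ n ∈ F, (f.toEquiv ^ n) x ∉ A₀ := by
    by_contra hw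
    push_neg at hw
    exact hcX (cm_of_cover f hw)
  have hwitY : ∃ B₀ : Set Y, IsOpen B₀ ∧ B₀.Nonempty ∧
      ∀ F : Finset ℤ, ∃ y, ∀ n ∈ F, (g.toEquiv ^ n) y ∉ B₀ := by
    by_contra hw
    push_neg at hw
    exact hcY (cm_of_cover g hw)
  -- shrink V, W to sets with compact closures
  obtain ⟨KV, hKVc, hxKV, hKVV⟩ := exists_compact_subset hVo hxV
  obtain ⟨KW, hKWc, hyKW, hKWW⟩ := exists_compact_subset hWo hyW
  set V' : Set X := interior KV with hV'def
  set W' : Set Y := interior KW with hW'def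
  have hclV' : closure V' ⊆ V := (closure_minimal interior_subset hKVc.isClosed).trans hKVV
  have hclW' : closure W' ⊆ W := (closure_minimal interior_subset hKWc.isClosed).trans hKWW
  have hV'c : IsCompact (closure V') :=
    hKVc.of_isClosed_subset isClosed_closure (closure_minimal interior_subset hKVc.isClosed)
  have hW'c : IsCompact (closure W') :=
    hKWc.of_isClosed_subset isClosed_closure (closure_minimal interior_subset hKWc.isClosed)
  have hT' : ∀ x ∈ closure V', ∀ y ∈ closure W',
      Dense (Set.range fun n : ℤ => ((f.prodCongr g).toEquiv ^ n) (x, y)) :=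
    fun x hx y hy => hVW x (hclV' hx) y (hclW' hy)
  have htrX : ∀ x ∈ closure V', Dense (Set.range fun n : ℤ => (f.toEquiv ^ n) x) :=
    fun x hx => (dense_proj f g (hT' x hx z₀.2 (subset_closure hyKW))).1
  have htrY : ∀ y ∈ closure W', Dense (Set.range fun n : ℤ => (g.toEquiv ^ n) y) :=
    fun y hy => (dense_proj f g (hT' z₀.1 (subset_closure hxKV) y hy)).2
  -- one-sided total avoiders in both factors
  obtain ⟨A, hAo, hAne, hAV', ε₁, hε₁, η, hη, havX⟩ :=
    total_avoider f isOpen_interior ⟨z₀.1, hxKV⟩ hV'c htrX hwitX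
  obtain ⟨B, hBo, hBne, hBW', ε₂, hε₂, θ, hθ, havY⟩ :=
    total_avoider g isOpen_interior ⟨z₀.2, hyKW⟩ hW'c htrY hwitY
  by_cases heq : ε₂ = ε₁
  · -- same side : flip the Y-side avoider or get compact minimality of Y
    subst heq
    rcases flip_or_cm g hW'c hBo hBne hBW' htrY hε₂ hθ havY with ⟨u, hu, havY'⟩ | hcm
    · exact opposite_contra f g hAo hAne hBo hBne hT' hAV' hBW' hε₁ hη hu havX havY'
    · exact hcY hcm
  · -- opposite sides : direct contradiction
    have hneg : ε₂ = -ε₁ := by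
      rcases hε₁ with rfl | rfl <;> rcases hε₂ with rfl | rfl <;> omega
    rw [hneg] at havY
    exact opposite_contra f g hAo hAne hBo hBne hT' hAV' hBW' hε₁ hη hθ havX havY
end

section
/- Let X be a locally compact, perfect, separable metric space and f : X → X a homeomorphism. If the product f × f : X × X → X × X is pseudo-minimal, then X consists of a single point. -/
open Topology

lemma zpow_continuous_aux {X : Type*} [TopologicalSpace X] (f : X ≃ₜ X) (n : ℤ) :
    Continuous fun z => (f.toEquiv ^ n) z := by
  induction n using Int.induction_on with
  | zero => simpa using continuous_id'
  | succ k ih =>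
      have h : (fun z : X => (f.toEquiv ^ ((k : ℤ) + 1)) z)
          = (fun z : X => (f.toEquiv ^ (k : ℤ)) z) ∘ f := by
        funext z
        rw [zpow_add_one, Equiv.Perm.mul_apply]
        rfl
      rw [h]
      exact ih.comp f.continuous
  | pred k ih =>
      have h : (fun z : X => (f.toEquiv ^ (-(k : ℤ) - 1)) z)
          = (fun z : X => (f.toEquiv ^ (-(k : ℤ))) z) ∘ f.symm := by
        funext z
        rw [zpow_sub_one, Equiv.Perm.mul_apply]
        rfl
      rw [h]
      exact ih.comp f.symm.continuous

lemma prod_zpow_aux {X : Type*} [TopologicalSpace X] (f : X ≃ₜ X) (n : ℤ) (p : X × X) :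
    ((f.prodCongr f).toEquiv ^ n) p = ((f.toEquiv ^ n) p.1, (f.toEquiv ^ n) p.2) := by
  induction n using Int.induction_on generalizing p with
  | zero => simp
  | succ k ih =>
      simp only [zpow_add_one, Equiv.Perm.mul_apply, ih]
      rfl
  | pred k ih =>
      simp only [zpow_sub_one, Equiv.Perm.mul_apply, ih]
      rfl

/-- If `f × f` is pseudo-minimal on `X × X` then `X` is a single point. -/
theorem stmt6 {X : Type*} [MetricSpace X] [LocallyCompactSpace X]
    [SecondCountableTopology X] [PerfectSpace X] (f : X ≃ₜ X)
    (hpm : IsPseudoMinimal (f.prodCongr f)) : Subsingleton X := by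
  by_contra hns
  rw [not_subsingleton_iff_nontrivial] at hns
  obtain ⟨U, hUo, ⟨⟨v, w⟩, hvwU⟩, hdense⟩ := hpm
  obtain ⟨ε₀, hε₀, hball⟩ := Metric.isOpen_iff.mp hUo _ hvwU
  have h1 := hdense _ hvwU
  -- find n with (f^n) v ∈ ball w ε₀
  obtain ⟨p, hpmem, hpR⟩ := h1.inter_open_nonempty
      (Metric.ball w ε₀ ×ˢ (Set.univ : Set X))
      (Metric.isOpen_ball.prod isOpen_univ)
      ⟨(w, w), by simp [hε₀]⟩
  obtain ⟨n, hn⟩ := hpR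
  set y : X := (f.toEquiv ^ n) v with hy
  have hyw : dist y w < ε₀ := by
    have := hpmem.1
    rw [← hn] at this
    simpa [prod_zpow_aux, hy] using this
  have hvyU : (v, y) ∈ U := by
    apply hball
    simp only [Metric.mem_ball, Prod.dist_eq]
    simp [hyw, hε₀]
  have h2 := hdense _ hvyU
  obtain ⟨a, ha⟩ := exists_ne y
  have hd : 0 < dist a y := dist_pos.mpr ha
  set ε : ℝ := dist a y / 3 with hε
  have hεpos : 0 < ε := by positivity
  have hc : ContinuousAt (fun z => (f.toEquiv ^ n) z) v :=
    (zpow_continuous_aux f n).continuousAt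
  obtain ⟨δ, hδpos, hδ⟩ := Metric.continuousAt_iff.mp hc ε hεpos
  obtain ⟨q, hqmem, hqR⟩ := h2.inter_open_nonempty
      (Metric.ball v δ ×ˢ Metric.ball a ε)
      (Metric.isOpen_ball.prod Metric.isOpen_ball)
      ⟨(v, a), by simp [hδpos, hεpos]⟩
  obtain ⟨m, hm⟩ := hqR
  rw [← hm] at hqmem
  simp only [prod_zpow_aux] at hqmem
  have h3 : dist ((f.toEquiv ^ m) v) v < δ := by simpa using hqmem.1
  have h4 : dist ((f.toEquiv ^ m) y) a < ε := by simpa using hqmem.2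
  have hcomm : (f.toEquiv ^ m) y = (f.toEquiv ^ n) ((f.toEquiv ^ m) v) := by
    rw [hy, ← Equiv.Perm.mul_apply, ← Equiv.Perm.mul_apply, ← zpow_add, ← zpow_add, add_comm]
  have h5 : dist ((f.toEquiv ^ m) y) y < ε := by
    rw [hcomm, hy]
    exact hδ h3
  have : dist a y ≤ dist a ((f.toEquiv ^ m) y) + dist ((f.toEquiv ^ m) y) y :=
    dist_triangle _ _ _
  rw [dist_comm] at h4
  have : dist a y < 2 * ε := by linarith
  rw [hε] at this
  linarith
end

section
/- Let X be a locally compact, perfect, separable metric space and f : X → X a pseudo-minimal homeomorphism. Let X_M denote the set of points with dense orbit. If X_M is connected, then for every integer n ≥ 1 the restriction of f^n to X_M is minimal; i.e. for every x ∈ X_M, the orbit of x under f^n is dense in X. -/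
open Topology

namespace Stmt7Aux

variable {X : Type*} [MetricSpace X] (f : X ≃ₜ X)

lemma cont_zpow : ∀ k : ℤ, Continuous ⇑(f.toEquiv ^ k) := by
  intro k
  induction k using Int.induction_on with
  | zero => simpa using continuous_id
  | succ k ih =>
      have h : f.toEquiv ^ ((k : ℤ) + 1) = f.toEquiv ^ (k : ℤ) * f.toEquiv := by
        rw [zpow_add_one]
      rw [h]
      have : ⇑(f.toEquiv ^ (k : ℤ) * f.toEquiv) = ⇑(f.toEquiv ^ (k : ℤ)) ∘ ⇑f.toEquiv := rfl
      rw [this]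
      exact ih.comp f.continuous
  | pred k ih =>
      have h : f.toEquiv ^ (-(k : ℤ) - 1) = f.toEquiv ^ (-(k : ℤ)) * f.toEquiv⁻¹ := by
        rw [zpow_sub_one]
      rw [h]
      have h2 : ⇑(f.toEquiv ^ (-(k : ℤ)) * f.toEquiv⁻¹) =
          ⇑(f.toEquiv ^ (-(k : ℤ))) ∘ ⇑(f.toEquiv⁻¹) := rfl
      rw [h2]
      have h3 : ⇑(f.toEquiv⁻¹) = ⇑f.symm := rfl
      rw [h3]
      exact ih.comp f.symm.continuous

/-- `f^k` as a homeomorphism. -/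
def T (k : ℤ) : X ≃ₜ X where
  toEquiv := f.toEquiv ^ k
  continuous_toFun := cont_zpow f k
  continuous_invFun := by
    have h : (f.toEquiv ^ k).symm = f.toEquiv ^ (-k) := by
      rw [zpow_neg]; rfl
    show Continuous ⇑(f.toEquiv ^ k).symm
    rw [h]; exact cont_zpow f (-k)

@[simp] lemma T_coe (k : ℤ) : ⇑(T f k) = ⇑(f.toEquiv ^ k) := rfl

lemma app_add (a b : ℤ) (x : X) :
    (f.toEquiv ^ a) ((f.toEquiv ^ b) x) = (f.toEquiv ^ (a + b)) x := by
  rw [zpow_add]; rfl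

/-- Full orbit. -/
def orb (x : X) : Set X := Set.range fun k : ℤ => (f.toEquiv ^ k) x

/-- `f^n`-orbit. -/
def orbn (n : ℤ) (x : X) : Set X := Set.range fun k : ℤ => (f.toEquiv ^ (n * k)) x

/-- Closure of the `f^n`-orbit. -/
def E (n : ℤ) (x : X) : Set X := closure (orbn f n x)

lemma isClosed_E (n : ℤ) (x : X) : IsClosed (E f n x) := isClosed_closure

lemma mem_E_self (n : ℤ) (x : X) : x ∈ E f n x := by
  apply subset_closure
  exact ⟨0, by simp⟩

lemma orb_shift (k : ℤ) (x : X) : orb f ((f.toEquiv ^ k) x) = orb f x := by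
  apply Set.Subset.antisymm
  · rintro _ ⟨m, rfl⟩
    exact ⟨m + k, (app_add f m k x).symm⟩
  · rintro _ ⟨m, rfl⟩
    refine ⟨m - k, ?_⟩
    show (f.toEquiv ^ (m - k)) ((f.toEquiv ^ k) x) = (f.toEquiv ^ m) x
    rw [app_add, sub_add_cancel]

lemma orbn_image (n r : ℤ) (x : X) :
    (f.toEquiv ^ r) '' orbn f n x = orbn f n ((f.toEquiv ^ r) x) := by
  have h1 : (f.toEquiv ^ r) '' orbn f n x
      = Set.range fun k : ℤ => (f.toEquiv ^ r) ((f.toEquiv ^ (n * k)) x) :=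
    (Set.range_comp _ _).symm
  have h2 : (fun k : ℤ => (f.toEquiv ^ r) ((f.toEquiv ^ (n * k)) x))
      = fun k : ℤ => (f.toEquiv ^ (n * k)) ((f.toEquiv ^ r) x) := by
    funext k
    rw [app_add, app_add, add_comm]
  rw [h1, h2]
  rfl

lemma E_image (n r : ℤ) (x : X) :
    (f.toEquiv ^ r) '' E f n x = E f n ((f.toEquiv ^ r) x) := by
  have := (T f r).image_closure (orbn f n x)
  simpa [E, orbn_image] using this

lemma orbn_shift (n j : ℤ) (x : X) : orbn f n ((f.toEquiv ^ (n * j)) x) = orbn f n x := by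
  apply Set.Subset.antisymm
  · rintro _ ⟨m, rfl⟩
    refine ⟨m + j, ?_⟩
    show (f.toEquiv ^ (n * (m + j))) x = (f.toEquiv ^ (n * m)) ((f.toEquiv ^ (n * j)) x)
    rw [app_add, ← mul_add]
  · rintro _ ⟨m, rfl⟩
    refine ⟨m - j, ?_⟩
    show (f.toEquiv ^ (n * (m - j))) ((f.toEquiv ^ (n * j)) x) = (f.toEquiv ^ (n * m)) x
    rw [app_add, ← mul_add, sub_add_cancel]

lemma E_shift (n j : ℤ) (x : X) : E f n ((f.toEquiv ^ (n * j)) x) = E f n x := by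
  unfold E; rw [orbn_shift]

lemma E_mono (n : ℤ) {x z : X} (hz : z ∈ E f n x) : E f n z ⊆ E f n x := by
  apply closure_minimal _ (isClosed_E f n x)
  rintro _ ⟨k, rfl⟩
  have : (f.toEquiv ^ (n * k)) z ∈ (f.toEquiv ^ (n * k)) '' E f n x :=
    Set.mem_image_of_mem _ hz
  rwa [E_image, E_shift] at this

end Stmt7Aux

namespace Stmt7Aux

variable {X : Type*} [MetricSpace X] (f : X ≃ₜ X)

lemma image_interior' (r : ℤ) (s : Set X) :
    (f.toEquiv ^ r) '' interior s = interior ((f.toEquiv ^ r) '' s) :=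
  (T f r).image_interior s

lemma cover (n : ℕ) (hn : 1 ≤ n) {z : X} (hz : Dense (orb f z)) :
    (⋃ i : Fin n, (f.toEquiv ^ ((i : ℕ) : ℤ)) '' E f (n : ℤ) z) = Set.univ := by
  apply Set.eq_univ_of_univ_subset
  have hn0 : (0 : ℤ) < (n : ℤ) := by exact_mod_cast hn
  have hsub : orb f z ⊆ ⋃ i : Fin n, (f.toEquiv ^ ((i : ℕ) : ℤ)) '' E f (n : ℤ) z := by
    rintro _ ⟨k, rfl⟩
    have hr0 : 0 ≤ k % (n : ℤ) := Int.emod_nonneg k (by omega)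
    have hrn : k % (n : ℤ) < (n : ℤ) := Int.emod_lt_of_pos k hn0
    refine Set.mem_iUnion.2 ⟨⟨(k % (n : ℤ)).toNat, by omega⟩, ?_⟩
    refine ⟨(f.toEquiv ^ ((n : ℤ) * (k / (n : ℤ)))) z, subset_closure ⟨k / (n : ℤ), rfl⟩, ?_⟩
    show (f.toEquiv ^ ((((k % (n : ℤ)).toNat : ℕ) : ℤ)))
        ((f.toEquiv ^ ((n : ℤ) * (k / (n : ℤ)))) z) = (f.toEquiv ^ k) z
    rw [app_add]
    have hxp : (((k % (n : ℤ)).toNat : ℕ) : ℤ) + (n : ℤ) * (k / (n : ℤ)) = k := by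
      rw [Int.toNat_of_nonneg hr0]
      exact Int.emod_add_mul_ediv k (n : ℤ)
    rw [hxp]
  calc Set.univ = closure (orb f z) := hz.closure_eq.symm
    _ ⊆ closure (⋃ i : Fin n, (f.toEquiv ^ ((i : ℕ) : ℤ)) '' E f (n : ℤ) z) :=
        closure_mono hsub
    _ = ⋃ i : Fin n, (f.toEquiv ^ ((i : ℕ) : ℤ)) '' E f (n : ℤ) z :=
        IsClosed.closure_eq (isClosed_iUnion_of_finite fun i =>
          (T f ((i : ℕ) : ℤ)).isClosedMap _ (isClosed_E f _ z))

lemma int_nonempty [LocallyCompactSpace X] [Nonempty X] (n : ℕ) (hn : 1 ≤ n) {z : X}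
    (hz : Dense (orb f z)) : (interior (E f (n : ℤ) z)).Nonempty := by
  obtain ⟨i, hi⟩ := nonempty_interior_of_iUnion_of_closed
    (f := fun i : Fin n => (f.toEquiv ^ ((i : ℕ) : ℤ)) '' E f (n : ℤ) z)
    (fun i => (T f ((i : ℕ) : ℤ)).isClosedMap _ (isClosed_E f _ z))
    (cover f n hn hz)
  rw [← image_interior' f ((i : ℕ) : ℤ)] at hi
  exact hi.of_image

lemma chain (n : ℕ) (hn : 1 ≤ n) {x : X} {r : ℤ}
    (hr : (f.toEquiv ^ r) x ∈ E f (n : ℤ) x) :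
    (f.toEquiv ^ r) '' E f (n : ℤ) x = E f (n : ℤ) x := by
  have h1 : (f.toEquiv ^ r) '' E f (n : ℤ) x ⊆ E f (n : ℤ) x := by
    rw [E_image]; exact E_mono f _ hr
  have key : ∀ j : ℕ, (f.toEquiv ^ (r * (j : ℤ))) '' E f (n : ℤ) x ⊆ E f (n : ℤ) x := by
    intro j
    induction j with
    | zero => simp
    | succ j ih =>
      have hfun : ⇑(f.toEquiv ^ (r * ((j + 1 : ℕ) : ℤ)))
          = ⇑(f.toEquiv ^ (r * (j : ℤ))) ∘ ⇑(f.toEquiv ^ r) := by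
        funext y
        show (f.toEquiv ^ (r * ((j + 1 : ℕ) : ℤ))) y
          = (f.toEquiv ^ (r * (j : ℤ))) ((f.toEquiv ^ r) y)
        rw [app_add]
        have hxp : r * (j : ℤ) + r = r * ((j + 1 : ℕ) : ℤ) := by push_cast; ring
        rw [hxp]
      have hsplit : (f.toEquiv ^ (r * ((j + 1 : ℕ) : ℤ))) '' E f (n : ℤ) x
          = (f.toEquiv ^ (r * (j : ℤ))) '' ((f.toEquiv ^ r) '' E f (n : ℤ) x) := by
        rw [hfun, Set.image_comp]
      rw [hsplit]
      exact (Set.image_mono h1).trans ih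
  obtain ⟨m, rfl⟩ : ∃ m, n = m + 1 := ⟨n - 1, by omega⟩
  apply Set.Subset.antisymm h1
  have hEq : (f.toEquiv ^ (r * (((m + 1 : ℕ)) : ℤ))) '' E f ((m + 1 : ℕ) : ℤ) x
      = E f ((m + 1 : ℕ) : ℤ) x := by
    rw [mul_comm, E_image, E_shift]
  calc E f ((m + 1 : ℕ) : ℤ) x
      = (f.toEquiv ^ (r * (((m + 1 : ℕ)) : ℤ))) '' E f ((m + 1 : ℕ) : ℤ) x := hEq.symm
    _ = (f.toEquiv ^ r) '' ((f.toEquiv ^ (r * (m : ℤ))) '' E f ((m + 1 : ℕ) : ℤ) x) := by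
        have hfun : ⇑(f.toEquiv ^ (r * ((m + 1 : ℕ) : ℤ)))
            = ⇑(f.toEquiv ^ r) ∘ ⇑(f.toEquiv ^ (r * (m : ℤ))) := by
          funext y
          show (f.toEquiv ^ (r * ((m + 1 : ℕ) : ℤ))) y
            = (f.toEquiv ^ r) ((f.toEquiv ^ (r * (m : ℤ))) y)
          rw [app_add]
          have hxp : r + r * (m : ℤ) = r * ((m + 1 : ℕ) : ℤ) := by push_cast; ring
          rw [hxp]
        rw [hfun, Set.image_comp]
    _ ⊆ (f.toEquiv ^ r) '' E f ((m + 1 : ℕ) : ℤ) x := Set.image_mono (key m)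

lemma E_eq [LocallyCompactSpace X] [Nonempty X] (n : ℕ) (hn : 1 ≤ n) {x z : X}
    (hx : Dense (orb f x)) (hz : Dense (orb f z)) (hzE : z ∈ E f (n : ℤ) x) :
    E f (n : ℤ) z = E f (n : ℤ) x := by
  apply Set.Subset.antisymm (E_mono f _ hzE)
  obtain ⟨y, hymem, hy⟩ := hx.exists_mem_open isOpen_interior (int_nonempty f n hn hz)
  obtain ⟨k, rfl⟩ := hymem
  have hk : (f.toEquiv ^ k) x ∈ E f (n : ℤ) z := interior_subset hy
  have hkx : (f.toEquiv ^ k) x ∈ E f (n : ℤ) x := E_mono f _ hzE hk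
  have hch := chain f n hn hkx
  have hsub : E f (n : ℤ) ((f.toEquiv ^ k) x) ⊆ E f (n : ℤ) z := E_mono f _ hk
  rw [← E_image, hch] at hsub
  exact hsub

lemma mem_interior_of_mem [LocallyCompactSpace X] [Nonempty X] (n : ℕ) (hn : 1 ≤ n)
    {x y : X} (hx : Dense (orb f x)) (hy : Dense (orb f y)) (hyE : y ∈ E f (n : ℤ) x) :
    y ∈ interior (E f (n : ℤ) x) := by
  have hEyx : E f (n : ℤ) y = E f (n : ℤ) x := E_eq f n hn hx hy hyE
  rw [← hEyx]
  obtain ⟨w, hwmem, hw⟩ := hy.exists_mem_open isOpen_interior (int_nonempty f n hn hy)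
  obtain ⟨k, rfl⟩ := hwmem
  have hkE : (f.toEquiv ^ k) y ∈ E f (n : ℤ) y := interior_subset hw
  have hch := chain f n hn hkE
  have hinv : (f.toEquiv ^ (-k)) '' E f (n : ℤ) y = E f (n : ℤ) y := by
    conv_lhs => rw [← hch]
    rw [← Set.image_comp]
    have hid : ⇑(f.toEquiv ^ (-k)) ∘ ⇑(f.toEquiv ^ k) = id := by
      funext w
      show (f.toEquiv ^ (-k)) ((f.toEquiv ^ k) w) = w
      rw [app_add]; simp
    rw [hid, Set.image_id]
  have hyin : y ∈ (f.toEquiv ^ (-k)) '' interior (E f (n : ℤ) y) := by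
    refine ⟨(f.toEquiv ^ k) y, hw, ?_⟩
    rw [app_add]; simp
  rwa [image_interior', hinv] at hyin

end Stmt7Aux

open Stmt7Aux

/-- If `f` is a pseudo-minimal homeomorphism of a locally compact, perfect, separable
metric space and the set `X_M` of points with dense orbit is connected, then every
power `f^n` (`n ≥ 1`) is minimal on `X_M`: each `x ∈ X_M` has dense `f^n`-orbit. -/
theorem stmt7 {X : Type*} [MetricSpace X] [LocallyCompactSpace X]
    [SecondCountableTopology X] [PerfectSpace X] (f : X ≃ₜ X)
    (hpm : ∃ U : Set X, IsOpen U ∧ U.Nonempty ∧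
      ∀ x ∈ U, Dense (Set.range fun n : ℤ => (f.toEquiv ^ n) x))
    (hconn : IsConnected {x : X | Dense (Set.range fun n : ℤ => (f.toEquiv ^ n) x)}) :
    ∀ n : ℕ, 1 ≤ n → ∀ x ∈ {x : X | Dense (Set.range fun m : ℤ => (f.toEquiv ^ m) x)},
      Dense (Set.range fun k : ℤ => (f.toEquiv ^ ((n : ℤ) * k)) x) := by
  classical
  intro n hn x hx
  obtain ⟨U, hUopen, hUne, hU⟩ := hpm
  obtain ⟨u₀, hu₀⟩ := hUne
  have : Nonempty X := ⟨u₀⟩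
  set M : Set X := {x : X | Dense (Set.range fun n : ℤ => (f.toEquiv ^ n) x)} with hMdef
  have hxM : Dense (orb f x) := hx
  have hMdense : Dense M := by
    have hsub : orb f u₀ ⊆ M := by
      rintro _ ⟨k, rfl⟩
      show Dense (Set.range fun m : ℤ => (f.toEquiv ^ m) ((f.toEquiv ^ k) u₀))
      have hsh := orb_shift f k u₀
      rw [show (Set.range fun m : ℤ => (f.toEquiv ^ m) ((f.toEquiv ^ k) u₀))
          = orb f ((f.toEquiv ^ k) u₀) from rfl, hsh]
      exact hU u₀ hu₀
    exact (hU u₀ hu₀).mono hsub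
  have hMsub : M ⊆ E f (n : ℤ) x := by
    by_contra hc
    rw [Set.not_subset] at hc
    obtain ⟨y, hyM, hyE⟩ := hc
    have hpre : IsPreconnected M := hconn.isPreconnected
    have h1 : M ⊆ interior (E f (n : ℤ) x) ∪ (E f (n : ℤ) x)ᶜ := by
      intro w hw
      by_cases hwE : w ∈ E f (n : ℤ) x
      · exact Or.inl (mem_interior_of_mem f n hn hxM hw hwE)
      · exact Or.inr hwE
    have h2 : (M ∩ interior (E f (n : ℤ) x)).Nonempty :=
      ⟨x, hx, mem_interior_of_mem f n hn hxM hxM (mem_E_self f _ x)⟩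
    have h3 : (M ∩ (E f (n : ℤ) x)ᶜ).Nonempty := ⟨y, hyM, hyE⟩
    obtain ⟨w, _, hw1, hw2⟩ := hpre _ _ isOpen_interior
      (isClosed_E f (n : ℤ) x).isOpen_compl h1 h2 h3
    exact hw2 (interior_subset hw1)
  have hE : E f (n : ℤ) x = Set.univ := by
    apply Set.eq_univ_of_univ_subset
    calc Set.univ = closure M := hMdense.closure_eq.symm
      _ ⊆ closure (E f (n : ℤ) x) := closure_mono hMsub
      _ = E f (n : ℤ) x := (isClosed_E f _ x).closure_eq
  show Dense (Set.range fun k : ℤ => (f.toEquiv ^ ((n : ℤ) * k)) x)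
  rw [dense_iff_closure_eq]
  exact hE
end

section
/- Let f be a pseudo-minimal homeomorphism of a metric space X, with X_M the set of points with dense orbit, and fix a prime p. For x ∈ X_M and residue class [i] mod p, define A_{[i]}^+(x) as the set of y ∈ X_M for which there is a sequence n_k ∈ ℤ with pn_k + i → +∞ and f^{pn_k+i}(x) → y. Then: if x has dense forward orbit, the union over i of A_{[i]}^+(x) equals X_M, f(A_{[i]}^+(x)) = A_{[i+1]}^+(x), and each A_{[i]}^+(x) has nonempty interior in X_M. Furthermore, if y ∈ A_{[i₀]}^+(x), then A_{[i]}^±(y) ⊆ A_{[i₀+i]}^+(x) for all i. -/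
open Topology Filter

/-- The set `X_M` of points with dense two-sided orbit. -/
def XM {X : Type*} [TopologicalSpace X] (f : X ≃ₜ X) : Set X :=
  {x : X | Dense (Set.range fun n : ℤ => (f.toEquiv ^ n) x)}

/-- `A_{[i]}^+(x)`: points `y ∈ X_M` reachable as limits of `f^{p n_k + i} x` along a
sequence with `p n_k + i → +∞`. -/
def Aplus {X : Type*} [TopologicalSpace X] (f : X ≃ₜ X) (p : ℕ) (x : X) (i : ℤ) :
    Set X :=
  {y ∈ XM f | ∃ n : ℕ → ℤ,
    Tendsto (fun k => (p : ℤ) * n k + i) atTop atTop ∧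
    Tendsto (fun k => (f.toEquiv ^ ((p : ℤ) * n k + i)) x) atTop (𝓝 y)}

/-- `A_{[i]}^-(x)`: as above but with `p n_k + i → -∞`. -/
def Aminus {X : Type*} [TopologicalSpace X] (f : X ≃ₜ X) (p : ℕ) (x : X) (i : ℤ) :
    Set X :=
  {y ∈ XM f | ∃ n : ℕ → ℤ,
    Tendsto (fun k => (p : ℤ) * n k + i) atTop atBot ∧
    Tendsto (fun k => (f.toEquiv ^ ((p : ℤ) * n k + i)) x) atTop (𝓝 y)}

section
variable {X : Type*} [MetricSpace X] (f : X ≃ₜ X)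

lemma pm_pow_apply (m : ℕ) (w : X) : (f.toEquiv ^ (m : ℤ)) w = (⇑f)^[m] w := by
  rw [zpow_natCast, Equiv.Perm.coe_pow]; rfl

lemma pm_neg_apply (m : ℕ) (w : X) : (f.toEquiv ^ (-(m : ℤ))) w = (⇑f.symm)^[m] w := by
  rw [zpow_neg, zpow_natCast, ← inv_pow, Equiv.Perm.coe_pow]; rfl

lemma cont_zpow (a : ℤ) : Continuous fun w : X => (f.toEquiv ^ a) w := by
  obtain ⟨m, rfl | rfl⟩ := a.eq_nat_or_neg
  · simpa only [pm_pow_apply] using f.continuous.iterate m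
  · simpa only [pm_neg_apply] using f.symm.continuous.iterate m

lemma zpow_add_apply (a b : ℤ) (w : X) :
    (f.toEquiv ^ (a + b)) w = (f.toEquiv ^ a) ((f.toEquiv ^ b) w) := by
  rw [zpow_add]; rfl

lemma XM_shift (m : ℤ) {y : X} (hy : y ∈ XM f) : (f.toEquiv ^ m) y ∈ XM f := by
  have hy' : Dense (Set.range fun n : ℤ => (f.toEquiv ^ n) y) := hy
  show Dense (Set.range fun n : ℤ => (f.toEquiv ^ n) ((f.toEquiv ^ m) y))
  have h1 : (fun n : ℤ => (f.toEquiv ^ n) ((f.toEquiv ^ m) y))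
      = (fun n : ℤ => (f.toEquiv ^ n) y) ∘ (fun n => n + m) := by
    funext n
    simp only [Function.comp_apply]
    exact (zpow_add_apply f n m y).symm
  have hsurj : Function.Surjective (fun n : ℤ => n + m) := fun n => ⟨n - m, by ring⟩
  rw [h1, hsurj.range_comp]
  exact hy'

end
section
variable {X : Type*} [MetricSpace X] (f : X ≃ₜ X)

lemma f_one_apply (w : X) : (f.toEquiv ^ (1 : ℤ)) w = f w := by rw [zpow_one]; rfl

lemma Aplus_image (p : ℕ) (x : X) (i : ℤ) : ⇑f '' Aplus f p x i = Aplus f p x (i + 1) := by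
  ext z
  constructor
  · rintro ⟨y, ⟨hyM, n, h1, h2⟩, rfl⟩
    refine ⟨?_, n, ?_, ?_⟩
    · have := XM_shift f 1 hyM
      rwa [f_one_apply] at this
    · have he : (fun k => (p : ℤ) * n k + (i + 1)) = fun k => ((p : ℤ) * n k + i) + 1 := by
        funext k; ring
      rw [he]
      exact tendsto_atTop_add_const_right _ _ h1
    · have heq : ∀ k, (f.toEquiv ^ ((p : ℤ) * n k + (i + 1))) x
          = f ((f.toEquiv ^ ((p : ℤ) * n k + i)) x) := by
        intro k
        rw [show (p : ℤ) * n k + (i + 1) = 1 + ((p : ℤ) * n k + i) by ring,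
          zpow_add_apply, f_one_apply]
      simp only [heq]
      exact (f.continuous.tendsto y).comp h2
  · rintro ⟨hzM, n, h1, h2⟩
    refine ⟨f.symm z, ⟨?_, n, ?_, ?_⟩, f.apply_symm_apply z⟩
    · have := XM_shift f (-1) hzM
      rwa [show (-1 : ℤ) = -(1 : ℕ) by norm_num, pm_neg_apply,
        Function.iterate_one] at this
    · have he : (fun k => (p : ℤ) * n k + i) = fun k => ((p : ℤ) * n k + (i + 1)) + (-1) := by
        funext k; ring
      rw [he]
      exact tendsto_atTop_add_const_right _ _ h1
    · have heq : ∀ k, (f.toEquiv ^ ((p : ℤ) * n k + i)) x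
          = f.symm ((f.toEquiv ^ ((p : ℤ) * n k + (i + 1))) x) := by
        intro k
        have h0 : (f.toEquiv ^ ((p : ℤ) * n k + (i + 1))) x
            = f ((f.toEquiv ^ ((p : ℤ) * n k + i)) x) := by
          rw [show (p : ℤ) * n k + (i + 1) = 1 + ((p : ℤ) * n k + i) by ring,
            zpow_add_apply, f_one_apply]
        rw [h0, f.symm_apply_apply]
      simp only [heq]
      exact (f.symm.continuous.tendsto z).comp h2

lemma Aplus_period (p : ℕ) (x : X) (i : ℤ) : Aplus f p x (i + p) = Aplus f p x i := by
  ext y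
  constructor
  · rintro ⟨hyM, n, h1, h2⟩
    refine ⟨hyM, fun k => n k + 1, ?_, ?_⟩
    · have he : ∀ k, (p : ℤ) * (n k + 1) + i = (p : ℤ) * n k + (i + p) := by intro k; ring
      simp only [he]; exact h1
    · have he : ∀ k, (p : ℤ) * (n k + 1) + i = (p : ℤ) * n k + (i + p) := by intro k; ring
      simp only [he]; exact h2
  · rintro ⟨hyM, n, h1, h2⟩
    refine ⟨hyM, fun k => n k - 1, ?_, ?_⟩
    · have he : ∀ k, (p : ℤ) * (n k - 1) + (i + p) = (p : ℤ) * n k + i := by intro k; ring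
      simp only [he]; exact h1
    · have he : ∀ k, (p : ℤ) * (n k - 1) + (i + p) = (p : ℤ) * n k + i := by intro k; ring
      simp only [he]; exact h2

end
section
variable {X : Type*} [MetricSpace X] (f : X ≃ₜ X)

/-- Every point lies in the closure of every tail of a dense forward orbit. -/
lemma tail_dense {x : X} (hxplus : Dense (Set.range fun n : ℕ => (⇑f)^[n] x))
    (N : ℕ) (y : X) : y ∈ closure ((fun m => (⇑f)^[m] x) '' {m : ℕ | N ≤ m}) := by
  have hT0 : ∀ z : X, z ∈ closure (Set.range fun n : ℕ => (⇑f)^[n] x) := fun z => hxplus z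
  set A : Set X := (fun m => (⇑f)^[m] x) '' Set.Iio N with hA
  have hAfin : A.Finite := (Set.finite_Iio N).image _
  set T : Set X := (fun m => (⇑f)^[m] x) '' {m : ℕ | N ≤ m} with hT
  have hsplit : ∀ z : X, z ∈ A ∪ closure T := by
    intro z
    have h1 : (Set.range fun n : ℕ => (⇑f)^[n] x) ⊆ A ∪ T := by
      rintro _ ⟨n, rfl⟩
      rcases lt_or_ge n N with h | h
      · exact Or.inl ⟨n, h, rfl⟩
      · exact Or.inr ⟨n, h, rfl⟩
    have h2 := (closure_mono h1) (hT0 z)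
    rwa [closure_union, hAfin.isClosed.closure_eq] at h2
  by_contra hyc
  obtain ⟨m, hmN, hmy⟩ : y ∈ A := (hsplit y).resolve_right hyc
  have hOopen : IsOpen (closure T)ᶜ := isClosed_closure.isOpen_compl
  have hOA : (closure T)ᶜ ⊆ A := fun z hz => (hsplit z).resolve_right hz
  have hyopen : IsOpen {y} := by
    have hset : {y} = (closure T)ᶜ ∩ (A \ {y})ᶜ := by
      ext z
      simp only [Set.mem_singleton_iff, Set.mem_inter_iff, Set.mem_compl_iff, Set.mem_diff]
      constructor
      · rintro rfl
        exact ⟨hyc, fun h => h.2 rfl⟩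
      · rintro ⟨hzO, hz⟩
        by_contra hne
        exact hz ⟨hOA hzO, hne⟩
    rw [hset]
    exact hOopen.inter (hAfin.subset Set.diff_subset).isClosed.isOpen_compl
  have hxopen : IsOpen {x} := by
    have hiter : ∀ k : ℕ, IsOpenMap ((⇑f.symm)^[k]) := by
      intro k
      induction k with
      | zero => simpa using IsOpenMap.id
      | succ k ih =>
        rw [Function.iterate_succ]
        exact ih.comp f.symm.isOpenMap
    have himg := hiter m _ hyopen
    have heq : (⇑f.symm)^[m] '' {y} = {x} := by
      rw [Set.image_singleton, ← hmy]
      congr 1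
      exact (Function.LeftInverse.iterate f.symm_apply_apply m) x
    rwa [heq] at himg
  have hfxopen : IsOpen {f.symm x} := by
    have := f.symm.isOpenMap _ hxopen
    rwa [Set.image_singleton] at this
  obtain ⟨w, hw1, q, hq⟩ :=
    (_root_.mem_closure_iff.mp (hT0 (f.symm x))) {f.symm x} hfxopen rfl
  have hq' : (⇑f)^[q] x = f.symm x := by
    rw [Set.mem_singleton_iff] at hw1
    rw [← hw1]; exact hq
  have hper : (⇑f)^[q + 1] x = x := by
    rw [Function.iterate_succ_apply', hq', f.apply_symm_apply]
  have hcyc : ∀ t : ℕ, (⇑f)^[(q + 1) * t] x = x := by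
    intro t
    induction t with
    | zero => simp
    | succ t ih => rw [Nat.mul_succ, Function.iterate_add_apply, hper, ih]
  refine hyc (subset_closure ⟨m + (q + 1) * N, ?_, ?_⟩)
  · have h1 : N ≤ (q + 1) * N := Nat.le_mul_of_pos_left N (Nat.succ_pos q)
    exact le_trans h1 (Nat.le_add_left _ _)
  · show (⇑f)^[m + (q + 1) * N] x = y
    rw [Function.iterate_add_apply, hcyc N]
    exact hmy

/-- The residue-class tails. -/
def resTail (f : X ≃ₜ X) (p : ℕ) (x : X) (j N : ℕ) : Set X :=
  (fun m => (⇑f)^[m] x) '' {m : ℕ | N ≤ m ∧ m % p = j}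

lemma mem_resTail_closure {x : X} (hxplus : Dense (Set.range fun n : ℕ => (⇑f)^[n] x))
    {p : ℕ} (hppos : 0 < p) (y : X) :
    ∃ j : ℕ, j < p ∧ ∀ N : ℕ, y ∈ closure (resTail f p x j N) := by
  have hchoice : ∀ k : ℕ, ∃ m : ℕ, k ≤ m ∧ dist y ((⇑f)^[m] x) < 1 / (k + 1) := by
    intro k
    obtain ⟨b, ⟨m, hm, rfl⟩, hb⟩ :=
      Metric.mem_closure_iff.mp (tail_dense f hxplus k y) (1 / (k + 1)) (by positivity)
    exact ⟨m, hm, hb⟩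
  choose m hm1 hm2 using hchoice
  obtain ⟨j, hj⟩ := Finite.exists_infinite_fiber (fun k => (⟨m k % p, Nat.mod_lt _ hppos⟩ : Fin p))
  have hjinf : Set.Infinite {k : ℕ | m k % p = (j : ℕ)} := by
    refine (Set.infinite_coe_iff.mp hj).mono ?_
    intro k hk
    simpa [Fin.ext_iff] using hk
  refine ⟨j, j.2, fun N => ?_⟩
  rw [Metric.mem_closure_iff]
  intro ε hε
  obtain ⟨K, hK⟩ := exists_nat_gt (1 / ε)
  obtain ⟨k, hk1, hk2⟩ := hjinf.exists_gt (max N K)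
  refine ⟨(⇑f)^[m k] x, ⟨m k, ⟨?_, hk1⟩, rfl⟩, ?_⟩
  · have : N ≤ k := le_trans (le_max_left N K) (le_of_lt hk2)
    exact le_trans this (hm1 k)
  · have hKk : (K : ℝ) < (k : ℝ) + 1 := by
      have : K ≤ k := le_trans (le_max_right N K) (le_of_lt hk2)
      push_cast
      exact_mod_cast lt_of_le_of_lt (by exact_mod_cast this) (lt_add_one _)
    have h1 : (1 : ℝ) / ε < (k : ℝ) + 1 := lt_trans hK hKk
    have h2 : (1 : ℝ) / ((k : ℝ) + 1) < ε := by
      rw [div_lt_iff₀ (by positivity)]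
      rw [div_lt_iff₀ hε] at h1
      nlinarith
    exact lt_trans (hm2 k) h2

lemma mem_Aplus_of_resTail {x : X} {p : ℕ} {j : ℕ} {y : X} (hyM : y ∈ XM f)
    (hy : ∀ N : ℕ, y ∈ closure (resTail f p x j N)) : y ∈ Aplus f p x (j : ℤ) := by
  have hchoice : ∀ k : ℕ, ∃ m : ℕ, (k ≤ m ∧ m % p = j) ∧ dist y ((⇑f)^[m] x) < 1 / (k + 1) := by
    intro k
    obtain ⟨b, ⟨m, hm, rfl⟩, hb⟩ :=
      Metric.mem_closure_iff.mp (hy k) (1 / (k + 1)) (by positivity)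
    exact ⟨m, hm, hb⟩
  choose m hm1 hm2 using hchoice
  have hmk : ∀ k, (p : ℤ) * ((m k / p : ℕ) : ℤ) + (j : ℤ) = ((m k : ℕ) : ℤ) := by
    intro k
    have h2 := Nat.div_add_mod (m k) p
    rw [(hm1 k).2] at h2
    exact_mod_cast congrArg (Nat.cast : ℕ → ℤ) h2
  refine ⟨hyM, fun k => ((m k / p : ℕ) : ℤ), ?_, ?_⟩
  · simp only [hmk]
    exact tendsto_atTop_mono (fun k => by exact_mod_cast (hm1 k).1) tendsto_natCast_atTop_atTop
  · simp only [hmk, pm_pow_apply]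
    rw [tendsto_iff_dist_tendsto_zero]
    refine squeeze_zero (fun k => dist_nonneg) (fun k => ?_)
      tendsto_one_div_add_atTop_nhds_zero_nat
    rw [dist_comm]
    exact le_of_lt (hm2 k)

end

/-- A finite family of closed sets covering a nonempty open set: one of them contains
a nonempty open set. -/
lemma finite_baire {X : Type*} [TopologicalSpace X] (l : List (Set X)) :
    ∀ U : Set X, IsOpen U → U.Nonempty → (∀ s ∈ l, IsClosed s) →
      (∀ z ∈ U, ∃ s ∈ l, z ∈ s) →
      ∃ s ∈ l, ∃ V : Set X, IsOpen V ∧ V.Nonempty ∧ V ⊆ U ∩ s := by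
  induction l with
  | nil =>
    intro U hU hUne hcl hsub
    obtain ⟨z, hz⟩ := hUne
    obtain ⟨s, hs, -⟩ := hsub z hz
    simp at hs
  | cons s l ih =>
    intro U hU hUne hcl hsub
    by_cases h : (U \ s).Nonempty
    · have hop : IsOpen (U \ s) := hU.sdiff (hcl s (by simp))
      have hsub' : ∀ z ∈ U \ s, ∃ t ∈ l, z ∈ t := by
        rintro z ⟨hz1, hz2⟩
        obtain ⟨t, ht, hzt⟩ := hsub z hz1
        rcases List.mem_cons.mp ht with rfl | ht'
        · exact absurd hzt hz2
        · exact ⟨t, ht', hzt⟩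
      obtain ⟨t, htl, V, hV1, hV2, hV3⟩ :=
        ih (U \ s) hop h (fun t ht => hcl t (List.mem_cons_of_mem _ ht)) hsub'
      exact ⟨t, List.mem_cons_of_mem _ htl, V, hV1, hV2,
        fun z hz => ⟨(hV3 hz).1.1, (hV3 hz).2⟩⟩
    · have hUs : U ⊆ s := by
        intro z hz
        by_contra hzs
        exact h ⟨z, hz, hzs⟩
      exact ⟨s, List.mem_cons_self, U, hU, hUne, fun z hz => ⟨hz, hUs hz⟩⟩
section
variable {X : Type*} [MetricSpace X] (f : X ≃ₜ X)

lemma diag_limit {p : ℕ} {x y : X} {i₀ i : ℤ} (hy : y ∈ Aplus f p x i₀) {z : X}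
    (hzM : z ∈ XM f) (e : ℕ → ℤ) (he : ∀ k, ∃ q : ℤ, e k = (p : ℤ) * q + i)
    (hlim : Tendsto (fun k => (f.toEquiv ^ e k) y) atTop (𝓝 z)) :
    z ∈ Aplus f p x (i₀ + i) := by
  obtain ⟨hyM, n, hn1, hn2⟩ := hy
  have hchoice : ∀ k : ℕ, ∃ jj : ℕ, (|e k| + k ≤ (p : ℤ) * n jj + i₀) ∧
      dist ((f.toEquiv ^ e k) ((f.toEquiv ^ ((p : ℤ) * n jj + i₀)) x))
        ((f.toEquiv ^ e k) y) < 1 / (k + 1) := by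
    intro k
    have h1 : ∀ᶠ jj in atTop, |e k| + k ≤ (p : ℤ) * n jj + i₀ := hn1.eventually_ge_atTop _
    have h2 : Tendsto (fun jj => (f.toEquiv ^ e k) ((f.toEquiv ^ ((p : ℤ) * n jj + i₀)) x))
        atTop (𝓝 ((f.toEquiv ^ e k) y)) := ((cont_zpow f (e k)).tendsto y).comp hn2
    have h3 := Metric.tendsto_nhds.mp h2 (1 / (k + 1)) (by positivity)
    exact (h1.and h3).exists
  choose jj hjj1 hjj2 using hchoice
  choose q hq using he
  have hkey : ∀ k, (p : ℤ) * (q k + n (jj k)) + (i₀ + i)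
      = e k + ((p : ℤ) * n (jj k) + i₀) := by
    intro k; rw [hq k]; ring
  refine ⟨hzM, fun k => q k + n (jj k), ?_, ?_⟩
  · refine tendsto_atTop_mono (fun k => ?_) tendsto_natCast_atTop_atTop
    rw [hkey k]
    have h1 := hjj1 k
    have h2 : -(e k) ≤ |e k| := neg_le_abs (e k)
    omega
  · simp only [hkey]
    have hsplit : ∀ k, (f.toEquiv ^ (e k + ((p : ℤ) * n (jj k) + i₀))) x
        = (f.toEquiv ^ e k) ((f.toEquiv ^ ((p : ℤ) * n (jj k) + i₀)) x) :=
      fun k => zpow_add_apply f _ _ x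
    simp only [hsplit]
    rw [tendsto_iff_dist_tendsto_zero]
    refine squeeze_zero (fun k => dist_nonneg) (fun k => ?_)
      (g := fun k : ℕ => 1 / (k + 1) + dist ((f.toEquiv ^ e k) y) z) ?_
    · calc dist ((f.toEquiv ^ e k) ((f.toEquiv ^ ((p : ℤ) * n (jj k) + i₀)) x)) z
          ≤ dist ((f.toEquiv ^ e k) ((f.toEquiv ^ ((p : ℤ) * n (jj k) + i₀)) x))
              ((f.toEquiv ^ e k) y) + dist ((f.toEquiv ^ e k) y) z := dist_triangle _ _ _
        _ ≤ 1 / (k + 1) + dist ((f.toEquiv ^ e k) y) z :=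
            by have := le_of_lt (hjj2 k); linarith
    · simpa using
        tendsto_one_div_add_atTop_nhds_zero_nat.add (tendsto_iff_dist_tendsto_zero.mp hlim)

end

/-- Basic properties of the sets `A_{[i]}^±(x)` for a pseudo-minimal homeomorphism. -/
theorem stmt9 {X : Type*} [MetricSpace X] (f : X ≃ₜ X) (p : ℕ) (hp : p.Prime)
    (hpm : ∃ U : Set X, IsOpen U ∧ U.Nonempty ∧ ∀ x ∈ U, x ∈ XM f)
    (x : X) (hx : x ∈ XM f)
    (hxplus : Dense (Set.range fun n : ℕ => (⇑f)^[n] x)) :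
    (⋃ i ∈ Finset.range p, Aplus f p x (i : ℤ)) = XM f ∧
    (∀ i : ℤ, ⇑f '' Aplus f p x i = Aplus f p x (i + 1)) ∧
    (∀ i : ℤ, (interior (Aplus f p x i)).Nonempty) ∧
    (∀ i₀ : ℤ, ∀ y ∈ Aplus f p x i₀, ∀ i : ℤ,
      Aplus f p y i ⊆ Aplus f p x (i₀ + i) ∧ Aminus f p y i ⊆ Aplus f p x (i₀ + i)) := by
  have hppos : 0 < p := hp.pos
  have claim2 : ∀ i : ℤ, ⇑f '' Aplus f p x i = Aplus f p x (i + 1) := fun i =>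
    Aplus_image f p x i
  have claim1 : (⋃ i ∈ Finset.range p, Aplus f p x (i : ℤ)) = XM f := by
    apply Set.Subset.antisymm
    · intro y hy
      simp only [Set.mem_iUnion] at hy
      obtain ⟨i, hi, hyi⟩ := hy
      exact hyi.1
    · intro y hyM
      obtain ⟨j, hjlt, hjall⟩ := mem_resTail_closure f hxplus hppos y
      have hmem := mem_Aplus_of_resTail f hyM hjall
      simp only [Set.mem_iUnion]
      exact ⟨j, Finset.mem_range.mpr hjlt, hmem⟩
  have claim3 : ∀ i : ℤ, (interior (Aplus f p x i)).Nonempty := by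
    obtain ⟨U, hUo, hUne, hUXM⟩ := hpm
    set Fset : ℕ → Set X := fun j => ⋂ N : ℕ, closure (resTail f p x j N) with hFset
    have hFclosed : ∀ j, IsClosed (Fset j) := fun j => isClosed_iInter fun N => isClosed_closure
    have hcover : ∀ z ∈ U, ∃ s ∈ (List.range p).map Fset, z ∈ s := by
      intro z hz
      obtain ⟨j, hjlt, hjall⟩ := mem_resTail_closure f hxplus hppos z
      exact ⟨Fset j, List.mem_map_of_mem (List.mem_range.mpr hjlt),
        Set.mem_iInter.mpr hjall⟩
    obtain ⟨s, hsl, V, hVo, hVne, hVsub⟩ := finite_baire ((List.range p).map Fset) U hUo hUne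
      (by rintro s hs; obtain ⟨j, -, rfl⟩ := List.mem_map.mp hs; exact hFclosed j) hcover
    obtain ⟨j, hjmem, rfl⟩ := List.mem_map.mp hsl
    have hVA : V ⊆ Aplus f p x (j : ℤ) := by
      intro z hz
      have hz1 := (hVsub hz).1
      have hz2 := Set.mem_iInter.mp (hVsub hz).2
      exact mem_Aplus_of_resTail f (hUXM z hz1) hz2
    have hbase : (interior (Aplus f p x (j : ℤ))).Nonempty := by
      obtain ⟨v, hv⟩ := hVne
      exact ⟨v, interior_maximal hVA hVo hv⟩
    have hstep : ∀ i : ℤ, (interior (Aplus f p x i)).Nonempty →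
        (interior (Aplus f p x (i + 1))).Nonempty := by
      intro i hint
      obtain ⟨v, hv⟩ := hint
      have hsub : ⇑f '' interior (Aplus f p x i) ⊆ Aplus f p x (i + 1) := by
        rw [← claim2 i]
        exact Set.image_mono interior_subset
      have hopen : IsOpen (⇑f '' interior (Aplus f p x i)) := f.isOpenMap _ isOpen_interior
      exact ⟨f v, interior_maximal hsub hopen ⟨v, hv, rfl⟩⟩
    have hnat : ∀ k : ℕ, (interior (Aplus f p x ((j : ℤ) + k))).Nonempty := by
      intro k
      induction k with
      | zero => simpa using hbase
      | succ k ih =>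
        have := hstep _ ih
        rwa [show (j : ℤ) + (k : ℤ) + 1 = (j : ℤ) + ((k + 1 : ℕ) : ℤ) by push_cast; ring] at this
    have hperiod : ∀ (i : ℤ) (t : ℕ), Aplus f p x (i + (p : ℤ) * t) = Aplus f p x i := by
      intro i t
      induction t with
      | zero => simp
      | succ t ih =>
        rw [show i + (p : ℤ) * ((t + 1 : ℕ) : ℤ) = (i + (p : ℤ) * t) + p by push_cast; ring,
          Aplus_period, ih]
    intro i
    set t : ℕ := ((j : ℤ) - i).toNat with ht
    have htge : (j : ℤ) - i ≤ (t : ℤ) := Int.self_le_toNat _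
    have hpt : (t : ℤ) ≤ (p : ℤ) * t :=
      le_mul_of_one_le_left (by exact_mod_cast Nat.zero_le t) (by exact_mod_cast hppos)
    have hk0 : (0 : ℤ) ≤ i + (p : ℤ) * t - j := by linarith
    set k : ℕ := (i + (p : ℤ) * t - j).toNat with hk
    have hkval : (k : ℤ) = i + (p : ℤ) * t - j := Int.toNat_of_nonneg hk0
    have := hnat k
    rwa [show (j : ℤ) + (k : ℤ) = i + (p : ℤ) * t by rw [hkval]; ring, hperiod i t] at this
  refine ⟨claim1, claim2, claim3, ?_⟩
  intro i₀ y hy i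
  constructor
  · rintro z ⟨hzM, m, hm1, hm2⟩
    exact diag_limit f hy hzM _ (fun k => ⟨m k, rfl⟩) hm2
  · rintro z ⟨hzM, m, hm1, hm2⟩
    exact diag_limit f hy hzM _ (fun k => ⟨m k, rfl⟩) hm2
end

section
/- Let (X,T) be a pseudo-minimal flow or homeomorphism on a compact metric space satisfying assumption (A). Then the following are equivalent: (1) every point of X_M (the set of points with dense orbit) is an equicontinuity point; (2) there exists at least one equicontinuity point; (3) (X,T) is an equicontinuous minimal system. -/
open Topology

/-- `x` is a (two-sided) equicontinuity point of the homeomorphism `f`. -/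
def IsEqcPoint {X : Type*} [MetricSpace X] (f : X ≃ₜ X) (x : X) : Prop :=
  ∀ ε > (0 : ℝ), ∃ δ > (0 : ℝ), ∀ y : X, dist x y ≤ δ →
    ∀ n : ℤ, dist ((f.toEquiv ^ n) x) ((f.toEquiv ^ n) y) < ε

namespace Stmt11Aux

variable {X : Type*} [MetricSpace X]

def pT (f : X ≃ₜ X) (n : ℤ) (y : X) : X := (f.toEquiv ^ n) y

theorem pT_add (f : X ≃ₜ X) (m n : ℤ) (z : X) : pT f (m + n) z = pT f m (pT f n z) := by
  simp only [pT, zpow_add, Equiv.Perm.mul_apply]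

theorem pT_zero (f : X ≃ₜ X) (z : X) : pT f 0 z = z := by simp [pT]

theorem pT_cancel (f : X ≃ₜ X) (n : ℤ) (z : X) : pT f (-n) (pT f n z) = z := by
  rw [← pT_add, neg_add_cancel, pT_zero]

theorem pT_one (f : X ≃ₜ X) (z : X) : pT f 1 z = f z := by
  show (f.toEquiv ^ (1:ℤ)) _ = _
  rw [zpow_one]; rfl

theorem pT_negone (f : X ≃ₜ X) (z : X) : pT f (-1) z = f.symm z := by
  show (f.toEquiv ^ (-1:ℤ)) _ = _
  rw [zpow_neg_one]; rfl

theorem pT_cont (f : X ≃ₜ X) (n : ℤ) : Continuous (pT f n) := by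
  induction n using Int.induction_on with
  | zero =>
      have h : pT f 0 = id := funext fun z => pT_zero f z
      rw [h]; exact continuous_id
  | succ k ih =>
      have h : pT f (k + 1) = f ∘ pT f k := by
        funext y
        have e : ((k:ℤ) + 1) = 1 + k := by ring
        rw [e, pT_add, pT_one]; rfl
      rw [h]; exact f.continuous.comp ih
  | pred k ih =>
      have h : pT f (-(k:ℤ) - 1) = f.symm ∘ pT f (-k) := by
        funext y
        have e : (-(k:ℤ) - 1) = -1 + -k := by ring
        rw [e, pT_add, pT_negone]; rfl
      rw [h]; exact f.symm.continuous.comp ih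

theorem pT_ucont [CompactSpace X] (f : X ≃ₜ X) (n : ℤ) {ε : ℝ} (hε : 0 < ε) :
    ∃ δ > (0:ℝ), ∀ a b : X, dist a b < δ → dist (pT f n a) (pT f n b) < ε := by
  have h := CompactSpace.uniformContinuous_of_continuous (pT_cont f n)
  rw [Metric.uniformContinuous_iff] at h
  obtain ⟨δ, hδ, h⟩ := h ε hε
  exact ⟨δ, hδ, fun a b hab => h hab⟩

theorem pT_fam [CompactSpace X] (f : X ≃ₜ X) (s : Finset ℤ) {ε : ℝ} (hε : 0 < ε) :
    ∃ δ > (0:ℝ), ∀ n ∈ s, ∀ a b : X, dist a b < δ → dist (pT f n a) (pT f n b) < ε := by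
  classical
  induction s using Finset.induction_on with
  | empty => exact ⟨1, one_pos, by simp⟩
  | @insert a s hns ih =>
      obtain ⟨δ₁, hδ₁, h₁⟩ := ih
      obtain ⟨δ₂, hδ₂, h₂⟩ := pT_ucont f a hε
      refine ⟨min δ₁ δ₂, lt_min hδ₁ hδ₂, ?_⟩
      intro n hn a' b' hab
      rcases Finset.mem_insert.1 hn with rfl | hn
      · exact h₂ a' b' (hab.trans_le (min_le_right _ _))
      · exact h₁ n hn a' b' (hab.trans_le (min_le_left _ _))

theorem dense_orb_iff (g : ℤ → X) :
    Dense (Set.range g) ↔ ∀ w : X, ∀ ε > (0:ℝ), ∃ n : ℤ, dist (g n) w < ε := by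
  constructor
  · intro hd w ε hε
    obtain ⟨y, hy, hmem⟩ := hd.exists_mem_open Metric.isOpen_ball (Metric.nonempty_ball.2 hε)
    obtain ⟨n, rfl⟩ := hy
    exact ⟨n, by simpa [Metric.mem_ball] using hmem⟩
  · intro h
    rw [Metric.dense_iff]
    intro w r hr
    obtain ⟨n, hn⟩ := h w r hr
    exact ⟨g n, Metric.mem_ball.2 hn, Set.mem_range_self n⟩

theorem aux [CompactSpace X] [PerfectSpace X] (f : X ≃ₜ X)
    (hpm : ∃ U : Set X, IsOpen U ∧ U.Nonempty ∧
      ∀ x ∈ U, Dense (Set.range fun n : ℤ => (f.toEquiv ^ n) x))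
    (x₀ : X) (hx₀ : IsEqcPoint f x₀) :
    (∀ ε > (0 : ℝ), ∃ δ > (0 : ℝ), ∀ a b : X, dist a b ≤ δ →
          ∀ n : ℤ, dist (pT f n a) (pT f n b) < ε) ∧
        ∀ y w : X, ∀ ε > (0:ℝ), ∃ n : ℤ, dist (pT f n y) w < ε := by
  obtain ⟨U, hUo, ⟨u₀, hu₀⟩, hUt⟩ := hpm
  have hu₀d : ∀ w : X, ∀ ε > (0:ℝ), ∃ n : ℤ, dist (pT f n u₀) w < ε :=
    (dense_orb_iff _).1 (hUt u₀ hu₀)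
  have glue : ∀ p : X, IsEqcPoint f p → ∀ ε > (0:ℝ), ∃ δ > (0:ℝ),
      ∀ z : X, dist p z ≤ δ → ∀ m : ℤ, dist (pT f m p) (pT f m z) < ε := by
    intro p hp ε hε
    obtain ⟨δ, hδ, h⟩ := hp ε hε
    exact ⟨δ, hδ, fun z hz m => h z hz m⟩
  -- the equicontinuity point is transitive
  have hx₀d : ∀ w : X, ∀ ε > (0:ℝ), ∃ n : ℤ, dist (pT f n x₀) w < ε := by
    intro w ε hε
    obtain ⟨δ, hδ, hg⟩ := glue x₀ hx₀ (ε/2) (by linarith)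
    obtain ⟨n, hn⟩ := hu₀d x₀ δ hδ
    have hz := hg (pT f n u₀) (by rw [dist_comm]; exact hn.le)
    obtain ⟨k, hk⟩ := hu₀d w (ε/2) (by linarith)
    refine ⟨k - n, ?_⟩
    have h1 := hz (k - n)
    rw [← pT_add] at h1
    have e : k - n + n = k := by ring
    rw [e] at h1
    calc dist (pT f (k-n) x₀) w ≤ dist (pT f (k-n) x₀) (pT f k u₀) + dist (pT f k u₀) w :=
          dist_triangle _ _ _
      _ < ε := by linarith
  -- move the equicontinuity point into U
  obtain ⟨ru, hru, hbu⟩ := Metric.isOpen_iff.1 hUo u₀ hu₀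
  obtain ⟨N, hN⟩ := hx₀d u₀ ru hru
  obtain ⟨x, hxdef⟩ : ∃ x : X, x = pT f N x₀ := ⟨_, rfl⟩
  have hxU : x ∈ U := hbu (Metric.mem_ball.2 (by rw [hxdef]; exact hN))
  have hx : ∀ ε > (0:ℝ), ∃ δ > (0:ℝ), ∀ z : X, dist x z ≤ δ →
      ∀ m : ℤ, dist (pT f m x) (pT f m z) < ε := by
    intro ε hε
    obtain ⟨δ₀, hδ₀, h₀⟩ := glue x₀ hx₀ ε hε
    obtain ⟨β, hβ, hβc⟩ := pT_ucont f (-N) hδ₀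
    refine ⟨β/2, by linarith, ?_⟩
    intro z hz m
    have h1 : dist (pT f (-N) x) (pT f (-N) z) < δ₀ :=
      hβc _ _ (lt_of_le_of_lt hz (by linarith))
    have h2 : pT f (-N) x = x₀ := by rw [hxdef, pT_cancel]
    rw [h2] at h1
    have h3 := h₀ (pT f (-N) z) h1.le (m + N)
    rw [← pT_add] at h3
    have e2 : m + N + -N = m := by ring
    rw [e2] at h3
    have e1 : pT f (m + N) x₀ = pT f m x := by rw [hxdef, ← pT_add]
    rw [e1] at h3
    exact h3
  have hxd : ∀ w : X, ∀ ε > (0:ℝ), ∃ n : ℤ, dist (pT f n x) w < ε := by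
    intro w ε hε
    obtain ⟨n, hn⟩ := hx₀d w ε hε
    refine ⟨n - N, ?_⟩
    have e : pT f (n - N) x = pT f n x₀ := by
      rw [hxdef, ← pT_add]
      congr 1
      ring
    rw [e]; exact hn
  obtain ⟨r, hrpos, hbr⟩ := Metric.isOpen_iff.1 hUo x hxU
  set r' : ℝ := r/2 with hr'def
  have hr' : 0 < r' := by positivity
  have hball_trans : ∀ z : X, dist x z ≤ r' → ∀ w : X, ∀ ε > (0:ℝ),
      ∃ n : ℤ, dist (pT f n z) w < ε := by
    intro z hz
    have hzU : z ∈ U := by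
      apply hbr
      rw [Metric.mem_ball, dist_comm]
      exact lt_of_le_of_lt hz (by rw [hr'def]; linarith)
    exact (dense_orb_iff _).1 (hUt z hzU)
  -- small recurrence (uses perfectness)
  have ret1 : ∀ η > (0:ℝ), ∃ q : ℤ, 1 ≤ q ∧ dist (pT f q x) x < η := by
    intro η hη
    obtain ⟨δ, hδ, hg⟩ := hx η hη
    have hθ : 0 < min δ η := lt_min hδ hη
    have hpb : ∃ y, y ∈ Metric.ball x (min δ η) ∧ y ≠ x := by
      have h1 : Metric.ball x (min δ η) ∈ 𝓝 x := Metric.ball_mem_nhds x hθ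
      have h2 : Metric.ball x (min δ η) ∈ 𝓝[≠] x := mem_nhdsWithin_of_mem_nhds h1
      obtain ⟨y, hy1, hy2⟩ :=
        Filter.nonempty_of_mem (Filter.inter_mem h2 (self_mem_nhdsWithin))
      exact ⟨y, hy1, hy2⟩
    obtain ⟨y, hyb, hyne⟩ := hpb
    have hyx : 0 < dist y x := dist_pos.2 hyne
    have hybx : dist y x < min δ η := Metric.mem_ball.1 hyb
    have hρ : 0 < min (dist y x) (min δ η - dist y x) := lt_min hyx (by linarith)
    obtain ⟨n, hn⟩ := hxd y _ hρ
    have hnθ : dist (pT f n x) x < min δ η := by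
      calc dist (pT f n x) x ≤ dist (pT f n x) y + dist y x := dist_triangle _ _ _
        _ < (min δ η - dist y x) + dist y x := by
            have := hn.trans_le (min_le_right _ _)
            linarith
        _ = min δ η := by ring
    have hne : pT f n x ≠ x := by
      intro hcontr
      rw [hcontr] at hn
      have h5 : min (dist y x) (min δ η - dist y x) ≤ dist x y := by
        rw [dist_comm]; exact min_le_left _ _
      exact lt_irrefl _ (hn.trans_le h5)
    have hn0 : n ≠ 0 := by
      intro h; apply hne; rw [h, pT_zero]
    rcases lt_or_gt_of_ne hn0 with hneg | hpos
    · have hg2 := hg (pT f n x)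
        (by rw [dist_comm]; exact (hnθ.trans_le (min_le_left _ _)).le) (-n)
      rw [pT_cancel] at hg2
      exact ⟨-n, by omega, hg2⟩
    · exact ⟨n, by omega, hnθ.trans_le (min_le_right _ _)⟩
  -- arbitrarily large positive return times
  have retBig : ∀ η > (0:ℝ), ∀ M : ℤ, ∃ q : ℤ, M < q ∧ dist (pT f q x) x < η := by
    intro η hη M
    by_cases hM : M < 1
    · obtain ⟨q, hq1, hq2⟩ := ret1 η hη
      exact ⟨q, by omega, hq2⟩
    · push_neg at hM
      by_cases hper : ∃ q : ℤ, 1 ≤ q ∧ q ≤ M ∧ pT f q x = x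
      · obtain ⟨q, hq1, hqM, hqx⟩ := hper
        have hmul : ∀ k : ℕ, pT f (k * q) x = x := by
          intro k
          induction k with
          | zero => simpa using pT_zero f x
          | succ k ih =>
              have e : ((k:ℤ)+1) * q = q + k * q := by ring
              have e2 : (((k+1:ℕ)):ℤ) * q = ((k:ℤ)+1) * q := by push_cast; ring
              rw [e2, e, pT_add, ih, hqx]
        refine ⟨(M.toNat + 1 : ℕ) * q, ?_, ?_⟩
        · have h1 : ((M.toNat + 1 : ℕ) : ℤ) = M + 1 := by omega
          have h2 : ((M.toNat + 1 : ℕ) : ℤ) * 1 ≤ ((M.toNat + 1 : ℕ) : ℤ) * q := by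
            apply mul_le_mul_of_nonneg_left hq1 (by omega)
          omega
        · rw [hmul]; simpa using hη
      · push_neg at hper
        have hne : (Finset.Icc (1:ℤ) M).Nonempty := ⟨1, by simp [Finset.mem_Icc]; omega⟩
        have hP : 0 < (Finset.Icc (1:ℤ) M).inf' hne (fun q => dist (pT f q x) x) := by
          rw [Finset.lt_inf'_iff]
          intro q hq
          rw [Finset.mem_Icc] at hq
          exact dist_pos.2 (hper q hq.1 hq.2)
        obtain ⟨q, hq1, hq2⟩ := ret1 _ (lt_min hη hP)
        refine ⟨q, ?_, hq2.trans_le (min_le_left _ _)⟩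
        by_contra hqM
        push_neg at hqM
        have h3 : (Finset.Icc (1:ℤ) M).inf' hne (fun q => dist (pT f q x) x)
            ≤ dist (pT f q x) x :=
          Finset.inf'_le _ (by rw [Finset.mem_Icc]; exact ⟨hq1, hqM⟩)
        have h4 := hq2.trans_le (min_le_right _ _)
        linarith
  -- every transitive point near x visits near x at arbitrarily large forward times
  have fwdVisit : ∀ z : X, dist x z ≤ r' → ∀ ρ > (0:ℝ), ∀ M : ℤ,
      ∃ τ : ℤ, M ≤ τ ∧ dist (pT f τ z) x < ρ := by
    intro z hz ρ hρ M
    obtain ⟨δ, hδ, hg⟩ := hx (ρ/2) (by linarith)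
    obtain ⟨n, hn⟩ := hball_trans z hz x δ hδ
    have hgz := hg (pT f n z) (by rw [dist_comm]; exact hn.le)
    obtain ⟨q, hqM, hq⟩ := retBig (ρ/2) (by linarith) (M - n)
    have h1 := hgz q
    rw [← pT_add] at h1
    refine ⟨q + n, by omega, ?_⟩
    calc dist (pT f (q+n) z) x ≤ dist (pT f (q+n) z) (pT f q x) + dist (pT f q x) x :=
          dist_triangle _ _ _
      _ < ρ := by rw [dist_comm] at h1; linarith
  -- compactness: bounded forward-visit time on the closed ball
  have cover : ∀ ρ > (0:ℝ), ∃ L : ℤ, 1 ≤ L ∧ ∀ z : X, dist x z ≤ r' →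
      ∃ τ : ℤ, 1 ≤ τ ∧ τ ≤ L ∧ dist (pT f τ z) x < ρ := by
    intro ρ hρ
    have hScomp : IsCompact (Metric.closedBall x r') :=
      Metric.isClosed_closedBall.isCompact
    set C : {m : ℤ // 1 ≤ m} → Set X := fun τ => (pT f τ.1) ⁻¹' (Metric.ball x ρ) with hC
    have hCo : ∀ τ, IsOpen (C τ) := fun τ =>
      (pT_cont f τ.1).isOpen_preimage _ Metric.isOpen_ball
    have hcov : Metric.closedBall x r' ⊆ ⋃ τ, C τ := by
      intro z hzS
      have hz : dist x z ≤ r' := by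
        rw [dist_comm]; exact Metric.mem_closedBall.1 hzS
      obtain ⟨τ, hτ1, hτ2⟩ := fwdVisit z hz ρ hρ 1
      refine Set.mem_iUnion.2 ⟨⟨τ, hτ1⟩, ?_⟩
      rw [hC]
      simpa [Metric.mem_ball] using hτ2
    obtain ⟨t, ht⟩ := hScomp.elim_finite_subcover C hCo hcov
    refine ⟨max 1 ((t.sup fun τ => τ.1.toNat : ℕ) : ℤ), le_max_left _ _, ?_⟩
    intro z hz
    have hzS : z ∈ Metric.closedBall x r' := by
      rw [Metric.mem_closedBall, dist_comm]; exact hz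
    obtain ⟨τ, hτt, hτz⟩ := Set.mem_iUnion₂.1 (ht hzS)
    refine ⟨τ.1, τ.2, ?_, ?_⟩
    · have h1 : τ.1.toNat ≤ t.sup (fun τ => τ.1.toNat) :=
        Finset.le_sup (f := fun τ : {m : ℤ // 1 ≤ m} => τ.1.toNat) hτt
      have h2 : ((τ.1.toNat : ℕ) : ℤ) ≤ ((t.sup fun τ => τ.1.toNat : ℕ) : ℤ) := by
        exact_mod_cast h1
      have h3 : (0:ℤ) ≤ τ.1 := by omega
      omega
    · have := hτz
      rw [hC] at this
      simpa [Metric.mem_ball] using this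
  -- syndetic returns
  have synd : ∀ ε₀ > (0:ℝ), ∃ L : ℤ, 1 ≤ L ∧ ∀ n : ℤ, ∃ t : ℤ,
      |n - t| ≤ L ∧ dist (pT f t x) x < ε₀ := by
    intro ε₀ hε₀
    obtain ⟨δE, hδE, hgE⟩ := hx ε₀ hε₀
    have hδf : 0 < min (min δE ε₀) r' := lt_min (lt_min hδE hε₀) hr'
    obtain ⟨L, hL1, hLcov⟩ := cover _ hδf
    have hch : ∀ z : X, ∃ τ : ℤ, dist x z ≤ r' →
        (1 ≤ τ ∧ τ ≤ L ∧ dist (pT f τ z) x < min (min δE ε₀) r') := by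
      intro z
      by_cases h : dist x z ≤ r'
      · obtain ⟨τ, h1, h2, h3⟩ := hLcov z h
        exact ⟨τ, fun _ => ⟨h1, h2, h3⟩⟩
      · exact ⟨1, fun hc => absurd hc h⟩
    choose g hg using hch
    obtain ⟨s, hs0, hsucc⟩ : ∃ s : ℕ → ℤ, s 0 = 0 ∧
        ∀ k, s (k+1) = s k + g (pT f (s k) x) := by
      refine ⟨fun k => Nat.rec (motive := fun _ => ℤ) 0
        (fun _ sk => sk + g (pT f sk x)) k, rfl, fun k => rfl⟩
    have inv : ∀ k : ℕ, dist x (pT f (s k) x) ≤ r' ∧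
        (1 ≤ k → dist (pT f (s k) x) x < min (min δE ε₀) r') := by
      intro k
      induction k with
      | zero =>
          constructor
          · rw [hs0, pT_zero, dist_self]; exact hr'.le
          · intro h; exact absurd h (by omega)
      | succ k ih =>
          obtain ⟨h1, h2, h3⟩ := hg (pT f (s k) x) ih.1
          have he : pT f (s (k+1)) x = pT f (g (pT f (s k) x)) (pT f (s k) x) := by
            rw [hsucc, add_comm (s k) (g (pT f (s k) x)), pT_add]
          constructor
          · rw [he, dist_comm]
            exact h3.le.trans (min_le_right _ _)
          · intro _
            rw [he]; exact h3
    have hstep : ∀ k : ℕ, s k < s (k+1) ∧ s (k+1) ≤ s k + L := by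
      intro k
      obtain ⟨h1, h2, _⟩ := hg (pT f (s k) x) (inv k).1
      rw [hsucc]; omega
    have hloc : ∀ m : ℕ, ∃ k : ℕ, s k ≤ (m:ℤ) ∧ (m:ℤ) < s (k+1) := by
      intro m
      induction m with
      | zero =>
          refine ⟨0, by simp [hs0], ?_⟩
          have h := (hstep 0).1
          omega
      | succ m ih =>
          obtain ⟨k, h1, h2⟩ := ih
          by_cases h : ((m:ℤ) + 1) < s (k+1)
          · exact ⟨k, by push_cast; omega, by push_cast; omega⟩
          · push_neg at h
            have h4 := (hstep (k+1)).1
            exact ⟨k+1, by push_cast; omega, by push_cast; omega⟩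
    have hpos : ∀ n : ℤ, 0 ≤ n → ∃ t : ℤ, |n - t| ≤ L ∧
        dist (pT f t x) x < min (min δE ε₀) r' := by
      intro n hn
      obtain ⟨k, h1, h2⟩ := hloc n.toNat
      rw [Int.toNat_of_nonneg hn] at h1 h2
      rcases Nat.eq_zero_or_pos k with hk | hk
      · subst hk
        refine ⟨s (0+1), ?_, (inv (0+1)).2 (by omega)⟩
        rw [abs_le]
        have h5 := (hstep 0).2
        rw [hs0] at h1 h5
        omega
      · have h6 := (inv k).2 hk
        have h7 := (hstep k).2
        refine ⟨s k, ?_, h6⟩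
        rw [abs_le]
        omega
    refine ⟨L, hL1, ?_⟩
    intro n
    rcases le_or_gt 0 n with hn | hn
    · obtain ⟨t, ht1, ht2⟩ := hpos n hn
      exact ⟨t, ht1, ht2.trans_le ((min_le_left _ _).trans (min_le_right _ _))⟩
    · obtain ⟨t', ht1, ht2⟩ := hpos (-n) (by omega)
      have hfl := hgE (pT f t' x)
        (by rw [dist_comm]
            exact (ht2.trans_le ((min_le_left _ _).trans (min_le_left _ _))).le) (-t')
      rw [pT_cancel] at hfl
      refine ⟨-t', ?_, hfl⟩
      have e : n - -t' = -(-n - t') := by ring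
      rw [e, abs_neg]
      exact ht1
  -- every orbit approaches x
  have noescape : ∀ y : X, ∀ ρ > (0:ℝ), ∃ m : ℤ, dist (pT f m y) x < ρ := by
    intro y ρ hρ
    by_contra hcon
    push_neg at hcon
    obtain ⟨L, hL1, hsynd⟩ := synd (ρ/2) (by linarith)
    obtain ⟨β, hβ, hfam⟩ := pT_fam f (Finset.Icc (-L) L) (show (0:ℝ) < ρ/4 by linarith)
    obtain ⟨n, hn⟩ := hxd y β hβ
    obtain ⟨t, ht1, ht2⟩ := hsynd n
    have hi : t - n ∈ Finset.Icc (-L) L := by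
      rw [Finset.mem_Icc]
      rw [abs_le] at ht1
      omega
    have h1 := hfam (t - n) hi (pT f n x) y hn
    rw [← pT_add] at h1
    have he : t - n + n = t := by ring
    rw [he] at h1
    have h2 := hcon (t - n)
    have h3 : dist (pT f (t-n) y) x ≤ dist (pT f (t-n) y) (pT f t x) + dist (pT f t x) x :=
      dist_triangle _ _ _
    rw [dist_comm] at h1
    linarith
  constructor
  · -- uniform equicontinuity
    intro ε hε
    obtain ⟨δE, hδE, hgE⟩ := hx (ε/3) (by linarith)
    set C : ℤ → Set X := fun m => (pT f m) ⁻¹' (Metric.ball x (δE/2)) with hC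
    have hCo : ∀ m, IsOpen (C m) := fun m =>
      (pT_cont f m).isOpen_preimage _ Metric.isOpen_ball
    have hcov : (Set.univ : Set X) ⊆ ⋃ m, C m := by
      intro y _
      obtain ⟨m, hm⟩ := noescape y (δE/2) (by linarith)
      refine Set.mem_iUnion.2 ⟨m, ?_⟩
      rw [hC]
      simpa [Metric.mem_ball] using hm
    obtain ⟨F, hF⟩ := isCompact_univ.elim_finite_subcover C hCo hcov
    obtain ⟨β, hβ, hfam⟩ := pT_fam f F (show (0:ℝ) < δE/2 by linarith)
    refine ⟨β/2, by linarith, ?_⟩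
    intro a b hab n
    obtain ⟨m, hmF, hma⟩ := Set.mem_iUnion₂.1 (hF (Set.mem_univ a))
    have hma' : dist (pT f m a) x < δE/2 := by
      rw [hC] at hma
      simpa [Metric.mem_ball] using hma
    have hmab : dist (pT f m a) (pT f m b) < δE/2 :=
      hfam m hmF a b (lt_of_le_of_lt hab (by linarith))
    have hxa : dist x (pT f m a) ≤ δE := by rw [dist_comm]; linarith
    have hxb : dist x (pT f m b) ≤ δE := by
      rw [dist_comm]
      calc dist (pT f m b) x ≤ dist (pT f m b) (pT f m a) + dist (pT f m a) x :=
            dist_triangle _ _ _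
        _ ≤ δE := by
            rw [dist_comm (pT f m b) (pT f m a)]
            linarith
    have h1 := hgE (pT f m a) hxa (n - m)
    have h2 := hgE (pT f m b) hxb (n - m)
    rw [← pT_add] at h1 h2
    have he : n - m + m = n := by ring
    rw [he] at h1 h2
    calc dist (pT f n a) (pT f n b)
        ≤ dist (pT f n a) (pT f (n-m) x) + dist (pT f (n-m) x) (pT f n b) :=
          dist_triangle _ _ _
      _ < ε := by rw [dist_comm] at h1; linarith
  · -- minimality
    intro y w ε hε
    obtain ⟨δE, hδE, hgE⟩ := hx (ε/2) (by linarith)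
    obtain ⟨m₀, hm₀⟩ := noescape y δE hδE
    have hz := hgE (pT f m₀ y) (by rw [dist_comm]; exact hm₀.le)
    obtain ⟨j, hj⟩ := hxd w (ε/2) (by linarith)
    have h1 := hz j
    rw [← pT_add] at h1
    refine ⟨j + m₀, ?_⟩
    calc dist (pT f (j+m₀) y) w ≤ dist (pT f (j+m₀) y) (pT f j x) + dist (pT f j x) w :=
          dist_triangle _ _ _
      _ < ε := by rw [dist_comm] at h1; linarith

end Stmt11Aux

/-- For a pseudo-minimal homeomorphism of a compact perfect metric space, the
following are equivalent: every point of `X_M` is an equicontinuity point; some point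
is an equicontinuity point; the system is equicontinuous and minimal. -/
theorem stmt11 {X : Type*} [MetricSpace X] [CompactSpace X] [PerfectSpace X]
    (f : X ≃ₜ X)
    (hpm : ∃ U : Set X, IsOpen U ∧ U.Nonempty ∧
      ∀ x ∈ U, Dense (Set.range fun n : ℤ => (f.toEquiv ^ n) x)) :
    List.TFAE
      [∀ x ∈ {x : X | Dense (Set.range fun n : ℤ => (f.toEquiv ^ n) x)},
          IsEqcPoint f x,
       ∃ x : X, IsEqcPoint f x,
       (∀ ε > (0 : ℝ), ∃ δ > (0 : ℝ), ∀ x y : X, dist x y ≤ δ →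
          ∀ n : ℤ, dist ((f.toEquiv ^ n) x) ((f.toEquiv ^ n) y) < ε) ∧
        ∀ x : X, Dense (Set.range fun n : ℤ => (f.toEquiv ^ n) x)] := by
  tfae_have 2 → 3 := by
    rintro ⟨x₀, hx₀⟩
    obtain ⟨huni, hmin⟩ := Stmt11Aux.aux f hpm x₀ hx₀
    refine ⟨?_, ?_⟩
    · intro ε hε
      obtain ⟨δ, hδ, h⟩ := huni ε hε
      exact ⟨δ, hδ, fun a b hab n => h a b hab n⟩
    · intro y
      exact (Stmt11Aux.dense_orb_iff (fun n : ℤ => (f.toEquiv ^ n) y)).2 (hmin y)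
  tfae_have 3 → 1 := by
    rintro ⟨huni, _⟩ x _ ε hε
    obtain ⟨δ, hδ, h⟩ := huni ε hε
    exact ⟨δ, hδ, fun y hy n => h x y hy n⟩
  tfae_have 1 → 2 := by
    intro h1
    obtain ⟨U, hUo, ⟨u₀, hu₀⟩, hUt⟩ := hpm
    exact ⟨u₀, h1 u₀ (hUt u₀ hu₀)⟩
  tfae_finish
end

section
/- Let f : X → X be an expansive homeomorphism of a compact metric space with expansivity constant e, and let c, ε > 0 with 4c < ε. Suppose Γ ⊆ W^s_{ε/2}(x) is a compact connected set containing x with diameter ≥ 6c, where W^s_δ(x) = {y : d(f^i(x), f^i(y)) ≤ δ for all i ≥ 0}. Then there exist points α, β ∈ Γ and compact connected sets Γ_α ∋ α, Γ_β ∋ β such that: Γ_α, Γ_β ⊆ Γ; the distance between Γ_α and Γ_β is greater than c/2; Γ_α ⊆ W^s_ε(α) and Γ_β ⊆ W^s_ε(β); and c ≤ diam(Γ_α), diam(Γ_β) ≤ 2c. -/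
open Topology
open Set

lemma exists_clopen_sep {Y : Type*} [TopologicalSpace Y] [T2Space Y] [CompactSpace Y]
    (x : Y) (L : Set Y) (hL : IsClosed L) (hdisj : Disjoint (connectedComponent x) L) :
    ∃ U : Set Y, IsClopen U ∧ x ∈ U ∧ Disjoint U L := by
  rw [connectedComponent_eq_iInter_isClopen, disjoint_comm, disjoint_iff_inter_eq_empty] at hdisj
  obtain ⟨t, ht⟩ := hL.isCompact.elim_finite_subfamily_closed
    (fun s : { s : Set Y // IsClopen s ∧ x ∈ s } => s.1) (fun s => s.2.1.1) hdisj
  refine ⟨⋂ i ∈ t, (i : { s : Set Y // IsClopen s ∧ x ∈ s }).1,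
    isClopen_biInter_finset fun i _ => i.2.1, mem_iInter₂.2 fun i _ => i.2.2, ?_⟩
  rw [disjoint_comm, disjoint_iff_inter_eq_empty]
  exact ht

/-- Boundary bumping: in a compact connected T2 set `Γ`, the connected component of `p`
in a closed subset `K ⊊ Γ` meets the closure of `Γ \ K`. -/
lemma bumping {X : Type*} [TopologicalSpace X] [T2Space X] {Γ K : Set X}
    (hΓc : IsCompact Γ) (hΓconn : IsPreconnected Γ) (hKc : IsClosed K)
    (hKΓ : K ⊆ Γ) {p : X} (hp : p ∈ K) (hne : (Γ \ K).Nonempty) :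
    ∃ z ∈ connectedComponentIn K p, z ∈ closure (Γ \ K) := by
  haveI : CompactSpace Γ := isCompact_iff_compactSpace.1 hΓc
  haveI : PreconnectedSpace Γ := Subtype.preconnectedSpace hΓconn
  set K' : Set Γ := Subtype.val ⁻¹' K with hK'
  have hK'c : IsClosed K' := hKc.preimage continuous_subtype_val
  haveI : CompactSpace K' := isCompact_iff_compactSpace.1 (hK'c.isCompact)
  have hKcompl : K'ᶜ = (Subtype.val ⁻¹' (Γ \ K) : Set Γ) := by
    ext y; simp [hK', y.2]
  set p' : Γ := ⟨p, hKΓ hp⟩ with hp'def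
  have hp' : p' ∈ K' := hp
  set p'' : K' := ⟨p', hp'⟩ with hp''def
  -- the frontier-ish set inside K'
  set L' : Set K' := Subtype.val ⁻¹' (closure K'ᶜ) with hL'
  have hL'c : IsClosed L' := isClosed_closure.preimage continuous_subtype_val
  have key : (connectedComponent p'' ∩ L').Nonempty := by
    by_contra hempty
    rw [not_nonempty_iff_eq_empty, ← disjoint_iff_inter_eq_empty] at hempty
    obtain ⟨U, hUclopen, hxU, hUdisj⟩ := exists_clopen_sep p'' L' hL'c hempty
    set V : Set Γ := Subtype.val '' U with hV
    have hVK' : V ⊆ K' := by rintro _ ⟨u, _, rfl⟩; exact u.2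
    have hVint : V ⊆ interior K' := by
      rintro _ ⟨u, hu, rfl⟩
      have : (u : Γ) ∉ closure K'ᶜ := fun h => hUdisj.ne_of_mem hu h rfl
      rw [closure_compl] at this
      simpa using this
    have hVclosed : IsClosed V :=
      (hUclopen.1.isCompact.image continuous_subtype_val).isClosed
    have hVopen : IsOpen V := by
      obtain ⟨W, hWopen, hWU⟩ := isOpen_induced_iff.1 hUclopen.2
      have : V = W ∩ interior K' := by
        apply Subset.antisymm
        · rintro v hv
          refine ⟨?_, hVint hv⟩
          obtain ⟨u, hu, rfl⟩ := hv
          exact (hWU ▸ hu : u ∈ Subtype.val ⁻¹' W)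
        · rintro v ⟨hvW, hvint⟩
          have hvK : v ∈ K' := interior_subset hvint
          have : (⟨v, hvK⟩ : K') ∈ U := by
            rw [← hWU]; exact hvW
          exact ⟨⟨v, hvK⟩, this, rfl⟩
      rw [this]
      exact hWopen.inter isOpen_interior
    have : V = ∅ ∨ V = univ := (isClopen_iff).1 ⟨hVclosed, hVopen⟩
    rcases this with h | h
    · exact absurd (h ▸ ⟨p'', hxU, rfl⟩ : p' ∈ (∅ : Set Γ)) (by simp)
    · obtain ⟨q, hq⟩ := hne
      have : (⟨q, hq.1⟩ : Γ) ∈ V := h ▸ mem_univ _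
      exact hq.2 (hVK' this)
  obtain ⟨z'', hz1, hz2⟩ := key
  refine ⟨z''.1.1, ?_, ?_⟩
  · have h1 : (z''.1 : Γ) ∈ connectedComponentIn K' p' := by
      rw [connectedComponentIn_eq_image hp']
      exact ⟨z'', hz1, rfl⟩
    have h2 := (continuous_subtype_val (p := (· ∈ Γ))).image_connectedComponentIn_subset hp'
    have himg : (Subtype.val : Γ → X) '' K' = K := by
      rw [Subtype.image_preimage_coe]; exact inter_eq_self_of_subset_right hKΓ
    exact connectedComponentIn_mono _ himg.subset (h2 ⟨z''.1, h1, rfl⟩)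
  · have : (z''.1 : Γ) ∈ closure (Subtype.val ⁻¹' (Γ \ K) : Set Γ) := hKcompl ▸ hz2
    have := (continuous_subtype_val (p := (· ∈ Γ))).closure_preimage_subset _ this
    exact this

/-- The local stable set `W^s_δ(x)` of `f`. -/
def Ws {X : Type*} [MetricSpace X] (f : X → X) (δ : ℝ) (x : X) : Set X :=
  {y : X | ∀ i : ℕ, dist (f^[i] x) (f^[i] y) ≤ δ}

/-- Splitting a large connected piece of a local stable set into two well-separated
connected pieces of controlled diameter. -/
theorem stmt13 {X : Type*} [MetricSpace X] [CompactSpace X] (f : X ≃ₜ X)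
    (e : ℝ) (he : 0 < e)
    (hexp : ∀ x y : X,
      (∀ n : ℤ, dist ((f.toEquiv ^ n) x) ((f.toEquiv ^ n) y) ≤ e) → x = y)
    (c ε : ℝ) (hc : 0 < c) (hε : 0 < ε) (h4c : 4 * c < ε)
    (x : X) (Γ : Set X) (hcomp : IsCompact Γ) (hconn : IsConnected Γ)
    (hsub : Γ ⊆ Ws (⇑f) (ε / 2) x) (hxΓ : x ∈ Γ) (hdiam : 6 * c ≤ Metric.diam Γ) :
    ∃ α β : X, ∃ Γα Γβ : Set X,
      α ∈ Γ ∧ β ∈ Γ ∧ α ∈ Γα ∧ β ∈ Γβ ∧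
      IsCompact Γα ∧ IsConnected Γα ∧ IsCompact Γβ ∧ IsConnected Γβ ∧
      Γα ⊆ Γ ∧ Γβ ⊆ Γ ∧
      (∀ g ∈ Γα, ∀ h ∈ Γβ, c / 2 < dist g h) ∧
      Γα ⊆ Ws (⇑f) ε α ∧ Γβ ⊆ Ws (⇑f) ε β ∧
      c ≤ Metric.diam Γα ∧ Metric.diam Γα ≤ 2 * c ∧
      c ≤ Metric.diam Γβ ∧ Metric.diam Γβ ≤ 2 * c := by
  -- find two far-apart points of Γ
  obtain ⟨p, hpΓ, q, hqΓ, hpq⟩ : ∃ p ∈ Γ, ∃ q ∈ Γ, 3 * c < dist p q := by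
    by_contra h
    push_neg at h
    have := Metric.diam_le_of_forall_dist_le (by positivity : (0:ℝ) ≤ 3 * c)
      fun a ha b hb => h a ha b hb
    linarith
  -- construct a continuum of diameter between c and 2c around a point
  have build : ∀ r ∈ Γ, ∀ w ∈ Γ, c < dist r w →
      ∃ A : Set X, r ∈ A ∧ IsCompact A ∧ IsConnected A ∧ A ⊆ Γ ∧
        A ⊆ Metric.closedBall r c ∧ c ≤ Metric.diam A ∧ Metric.diam A ≤ 2 * c := by
    intro r hr w hw hrw
    set K : Set X := Γ ∩ Metric.closedBall r c with hK
    have hKclosed : IsClosed K := hcomp.isClosed.inter Metric.isClosed_closedBall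
    have hKΓ : K ⊆ Γ := Set.inter_subset_left
    have hrK : r ∈ K := ⟨hr, Metric.mem_closedBall_self hc.le⟩
    have hne : (Γ \ K).Nonempty := by
      refine ⟨w, hw, fun hwK => ?_⟩
      have : dist w r ≤ c := hwK.2
      rw [dist_comm] at hrw
      linarith
    obtain ⟨z, hzA, hzcl⟩ := bumping hcomp hconn.isPreconnected hKclosed hKΓ hrK hne
    set A := connectedComponentIn K r with hA
    have hAK : A ⊆ K := connectedComponentIn_subset K r
    have hrA : r ∈ A := mem_connectedComponentIn hrK
    have hAconn : IsConnected A := isConnected_connectedComponentIn_iff.2 hrK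
    have hAcompact : IsCompact A := by
      have hKcomp : IsCompact K := hcomp.of_isClosed_subset hKclosed hKΓ
      haveI : CompactSpace K := isCompact_iff_compactSpace.1 hKcomp
      rw [hA, connectedComponentIn_eq_image hrK]
      exact isClosed_connectedComponent.isCompact.image continuous_subtype_val
    have hAball : A ⊆ Metric.closedBall r c := hAK.trans Set.inter_subset_right
    have hzdist : c ≤ dist z r := by
      have hsubset : Γ \ K ⊆ (Metric.ball r c)ᶜ := by
        rintro y ⟨hyΓ, hyK⟩ hyb
        exact hyK ⟨hyΓ, Metric.ball_subset_closedBall hyb⟩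
      have := closure_minimal hsubset Metric.isOpen_ball.isClosed_compl hzcl
      simpa [Metric.mem_ball, not_lt] using this
    refine ⟨A, hrA, hAcompact, hAconn, hAK.trans hKΓ, hAball, ?_, ?_⟩
    · calc c ≤ dist z r := hzdist
        _ ≤ Metric.diam A := Metric.dist_le_diam_of_mem hAcompact.isBounded hzA hrA
    · calc Metric.diam A ≤ Metric.diam (Metric.closedBall r c) :=
          Metric.diam_mono hAball Metric.isBounded_closedBall
        _ ≤ 2 * c := Metric.diam_closedBall hc.le
  obtain ⟨A, hpA, hAcomp, hAconn, hAΓ, hAball, hAd1, hAd2⟩ :=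
    build p hpΓ q hqΓ (by linarith)
  obtain ⟨B, hqB, hBcomp, hBconn, hBΓ, hBball, hBd1, hBd2⟩ :=
    build q hqΓ p hpΓ (by rw [dist_comm]; linarith)
  refine ⟨p, q, A, B, hpΓ, hqΓ, hpA, hqB, hAcomp, hAconn, hBcomp, hBconn, hAΓ, hBΓ,
    ?_, ?_, ?_, hAd1, hAd2, hBd1, hBd2⟩
  · intro g hg h hh
    have h1 : dist g p ≤ c := hAball hg
    have h2 : dist h q ≤ c := hBball hh
    have h3 : dist p q ≤ dist p g + dist g h + dist h q := dist_triangle4 p g h q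
    rw [dist_comm] at h1
    linarith
  · intro y hy i
    have h1 := hsub hpΓ i
    have h2 := hsub (hAΓ hy) i
    have h3 : dist (f^[i] p) (f^[i] y) ≤ dist (f^[i] p) (f^[i] x) + dist (f^[i] x) (f^[i] y) :=
      dist_triangle _ _ _
    have h4 : dist (f^[i] p) (f^[i] x) = dist (f^[i] x) (f^[i] p) := dist_comm _ _
    linarith
  · intro y hy i
    have h1 := hsub hqΓ i
    have h2 := hsub (hBΓ hy) i
    have h3 : dist (f^[i] q) (f^[i] y) ≤ dist (f^[i] q) (f^[i] x) + dist (f^[i] x) (f^[i] y) :=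
      dist_triangle _ _ _
    have h4 : dist (f^[i] q) (f^[i] x) = dist (f^[i] x) (f^[i] q) := dist_comm _ _
    linarith
end

section
/- Let G be a topological group, τ : G → G a bicontinuous automorphism, and H a closed normal subgroup with τ(H) = H. If the system (G,τ) is pseudo-minimal, then the induced automorphism on the quotient group G/H is also pseudo-minimal. -/
open Topology

/-- If `τ` is a bicontinuous automorphism of a topological group `G`, `H` a closed
normal `τ`-invariant subgroup, and `(G, τ)` is pseudo-minimal, then the induced
automorphism of `G ⧸ H` is pseudo-minimal. -/
theorem stmt14 {G : Type*} [TopologicalSpace G] [Group G] [IsTopologicalGroup G]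
    (τ : G ≃ₜ G) (hτ : ∀ a b : G, τ (a * b) = τ a * τ b)
    (H : Subgroup G) [H.Normal] (hHclosed : IsClosed (H : Set G))
    (hHinv : τ '' (H : Set G) = (H : Set G))
    (hpm : ∃ U : Set G, IsOpen U ∧ U.Nonempty ∧
      ∀ g ∈ U, Dense (Set.range fun n : ℤ => (τ.toEquiv ^ n) g)) :
    ∃ V : Set (G ⧸ H), IsOpen V ∧ V.Nonempty ∧
      ∀ g : G, (g : G ⧸ H) ∈ V →
        Dense ((QuotientGroup.mk : G → G ⧸ H) ''
          (Set.range fun n : ℤ => (τ.toEquiv ^ n) g)) := by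
  obtain ⟨U, hUopen, hUne, hUdense⟩ := hpm
  -- τ.symm is multiplicative
  have hτ' : ∀ a b : G, τ.symm (a * b) = τ.symm a * τ.symm b := by
    intro a b
    apply τ.injective
    rw [hτ, τ.apply_symm_apply, τ.apply_symm_apply, τ.apply_symm_apply]
  -- all integer powers are multiplicative
  have hmul : ∀ n : ℤ, ∀ a b : G, (τ.toEquiv ^ n) (a * b)
      = (τ.toEquiv ^ n) a * (τ.toEquiv ^ n) b := by
    intro n
    induction n using Int.induction_on with
    | zero => simp
    | succ k ih =>
      intro a b
      have : τ.toEquiv ^ ((k : ℤ) + 1) = τ.toEquiv ^ (k : ℤ) * τ.toEquiv := by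
        rw [zpow_add_one]
      simp only [this, Equiv.Perm.mul_apply]
      show (τ.toEquiv ^ (k : ℤ)) (τ (a * b)) = _
      rw [hτ, ih]
      rfl
    | pred k ih =>
      intro a b
      have : τ.toEquiv ^ (-(k : ℤ) - 1) = τ.toEquiv ^ (-(k : ℤ)) * τ.toEquiv⁻¹ := by
        rw [zpow_sub_one]
      simp only [this, Equiv.Perm.mul_apply]
      have hsymm : ∀ x, (τ.toEquiv⁻¹) x = τ.symm x := fun x => rfl
      rw [hsymm, hsymm, hsymm, hτ', ih]
  -- H is invariant under τ and τ.symm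
  have hHτ : ∀ h ∈ H, τ h ∈ H := by
    intro h hh
    have : τ h ∈ τ '' (H : Set G) := Set.mem_image_of_mem _ hh
    rwa [hHinv] at this
  have hHτ' : ∀ h ∈ H, τ.symm h ∈ H := by
    intro h hh
    have hh' : h ∈ τ '' (H : Set G) := by rw [hHinv]; exact hh
    obtain ⟨x, hx, hxe⟩ := hh'
    rwa [← hxe, τ.symm_apply_apply]
  have hHpow : ∀ n : ℤ, ∀ h ∈ H, (τ.toEquiv ^ n) h ∈ H := by
    intro n
    induction n using Int.induction_on with
    | zero => simp only [zpow_zero]; exact fun h hh => hh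
    | succ k ih =>
      intro h hh
      have : τ.toEquiv ^ ((k : ℤ) + 1) = τ.toEquiv ^ (k : ℤ) * τ.toEquiv := by
        rw [zpow_add_one]
      rw [this, Equiv.Perm.mul_apply]
      exact ih _ (hHτ h hh)
    | pred k ih =>
      intro h hh
      have : τ.toEquiv ^ (-(k : ℤ) - 1) = τ.toEquiv ^ (-(k : ℤ)) * τ.toEquiv⁻¹ := by
        rw [zpow_sub_one]
      rw [this, Equiv.Perm.mul_apply]
      exact ih _ (hHτ' h hh)
  refine ⟨(QuotientGroup.mk : G → G ⧸ H) '' U,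
    QuotientGroup.isOpenMap_coe U hUopen, hUne.image _, ?_⟩
  intro g hg
  obtain ⟨u, hu, huv⟩ := hg
  -- g = u * h for some h ∈ H
  have hrel : u⁻¹ * g ∈ H := QuotientGroup.eq.mp huv
  set h : G := u⁻¹ * g with hdef
  have hg' : g = u * h := by rw [hdef]; group
  -- the images of the orbits of g and u agree
  have himg : ∀ n : ℤ, (QuotientGroup.mk : G → G ⧸ H) ((τ.toEquiv ^ n) g)
      = QuotientGroup.mk ((τ.toEquiv ^ n) u) := by
    intro n
    rw [hg', hmul]
    exact (QuotientGroup.mk_mul_of_mem _ (hHpow n h hrel))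
  have hkey : (QuotientGroup.mk : G → G ⧸ H) '' (Set.range fun n : ℤ => (τ.toEquiv ^ n) g)
      = (QuotientGroup.mk : G → G ⧸ H) '' (Set.range fun n : ℤ => (τ.toEquiv ^ n) u) := by
    ext x
    simp only [Set.mem_image, Set.mem_range]
    constructor
    · rintro ⟨y, ⟨n, rfl⟩, rfl⟩
      exact ⟨(τ.toEquiv ^ n) u, ⟨n, rfl⟩, (himg n).symm⟩
    · rintro ⟨y, ⟨n, rfl⟩, rfl⟩
      exact ⟨(τ.toEquiv ^ n) g, ⟨n, rfl⟩, himg n⟩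
  rw [hkey]
  -- image of a dense set under a continuous surjection is dense
  have hd := hUdense u hu
  have hcont : Continuous (QuotientGroup.mk : G → G ⧸ H) := continuous_quotient_mk'
  have hsurj : Function.Surjective (QuotientGroup.mk : G → G ⧸ H) :=
    QuotientGroup.mk_surjective
  rw [dense_iff_closure_eq]
  apply Set.eq_univ_of_univ_subset
  calc (Set.univ : Set (G ⧸ H))
      = QuotientGroup.mk '' Set.univ := (Set.image_univ_of_surjective hsurj).symm
    _ = QuotientGroup.mk '' closure (Set.range fun n : ℤ => (τ.toEquiv ^ n) u) := by
        rw [hd.closure_eq]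
    _ ⊆ closure (QuotientGroup.mk '' (Set.range fun n : ℤ => (τ.toEquiv ^ n) u)) :=
        image_closure_subset_closure_image hcont
  done
end

section
/- Let X be a compact connected abelian topological group, T(x) = a + τ(x) an affine transformation (τ an automorphism), and β(x) = τ(x) - x. If T has a dense orbit, then the closed subgroup generated by the closure of {na : n ∈ ℤ} together with β(X) is all of X. -/
open Topology

/-- If the affine transformation `T x = a + τ x` of a compact connected abelian group
has a dense orbit, then the closed subgroup generated by the closure of `{n • a}`
together with `β(X)`, where `β x = τ x - x`, is the whole group. -/
theorem stmt17 {X : Type*} [TopologicalSpace X] [AddCommGroup X]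
    [IsTopologicalAddGroup X] [CompactSpace X] [ConnectedSpace X]
    (τ : X ≃ₜ X) (hτ : ∀ a b : X, τ (a + b) = τ a + τ b) (a : X)
    (T : X ≃ₜ X) (hT : ∀ x : X, T x = a + τ x)
    (hdense : ∃ x : X, Dense (Set.range fun n : ℤ => (T.toEquiv ^ n) x)) :
    (AddSubgroup.closure
        (closure (Set.range fun n : ℤ => n • a) ∪
          Set.range fun x : X => τ x - x)).topologicalClosure = ⊤ := by
  obtain ⟨x, hx⟩ := hdense
  set S := (AddSubgroup.closure
      (closure (Set.range fun n : ℤ => n • a) ∪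
        Set.range fun x : X => τ x - x)).topologicalClosure with hS
  have hsub : (closure (Set.range fun n : ℤ => n • a) ∪
      Set.range fun x : X => τ x - x) ⊆ (S : Set X) := fun y hy =>
    AddSubgroup.le_topologicalClosure _ (AddSubgroup.subset_closure hy)
  have ha : a ∈ S := hsub (Or.inl (subset_closure ⟨1, one_zsmul a⟩))
  have hβ : ∀ y, τ y - y ∈ S := fun y => hsub (Or.inr ⟨y, rfl⟩)
  have hTx : ∀ y, T y - y ∈ S := by
    intro y
    rw [hT]
    have h : a + τ y - y = a + (τ y - y) := by abel
    rw [h]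
    exact S.add_mem ha (hβ y)
  have hTinv : ∀ y, T.symm y - y ∈ S := by
    intro y
    have h := hTx (T.symm y)
    rw [T.apply_symm_apply] at h
    have h2 := S.neg_mem h
    rwa [neg_sub] at h2
  have key : ∀ n : ℤ, ∀ y : X, (T.toEquiv ^ n) y - y ∈ S := by
    intro n
    induction n using Int.induction_on with
    | zero => intro y; simpa using S.zero_mem
    | succ n ih =>
        intro y
        have h1 : (T.toEquiv ^ ((n : ℤ) + 1)) y = (T.toEquiv ^ (n : ℤ)) (T y) := by
          rw [zpow_add, zpow_one]; rfl
        have h2 : (T.toEquiv ^ (n : ℤ)) (T y) - y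
            = ((T.toEquiv ^ (n : ℤ)) (T y) - T y) + (T y - y) := by abel
        rw [h1, h2]
        exact S.add_mem (ih _) (hTx y)
    | pred n ih =>
        intro y
        have h1 : (T.toEquiv ^ (-(n : ℤ) - 1)) y = (T.toEquiv ^ (-(n : ℤ))) (T.symm y) := by
          rw [sub_eq_add_neg, zpow_add, zpow_neg_one]; rfl
        have h2 : (T.toEquiv ^ (-(n : ℤ))) (T.symm y) - y
            = ((T.toEquiv ^ (-(n : ℤ))) (T.symm y) - T.symm y) + (T.symm y - y) := by abel
        rw [h1, h2]
        exact S.add_mem (ih _) (hTinv y)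
  have hclosed : IsClosed {z : X | z - x ∈ S} := by
    have h : {z : X | z - x ∈ S} = (fun z => z - x) ⁻¹' (S : Set X) := rfl
    rw [h]
    exact (AddSubgroup.isClosed_topologicalClosure _).preimage
      (continuous_id.sub continuous_const)
  have horb : Set.range (fun n : ℤ => (T.toEquiv ^ n) x) ⊆ {z | z - x ∈ S} := by
    rintro _ ⟨n, rfl⟩; exact key n x
  have hall : ∀ z : X, z - x ∈ S := by
    intro z
    have h := closure_minimal horb hclosed
    rw [hx.closure_eq] at h
    exact h (Set.mem_univ z)
  rw [eq_top_iff]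
  intro z _
  have h := hall (z + x)
  rwa [add_sub_cancel_right] at h
end
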